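/- arXiv:math/0104043 — 3 statements merged into one kernel-verified Lean document; each statement's English description precedes it below -/
import Mathlib

section
/- For every deterministic initial configuration W_0 ∈ [0,∞)^{Λ^N}, the law of W_t converges weakly, as t → ∞, to the unique invariant probability measure μ^N of the silo process. -/
open MeasureTheory ProbabilityTheory Filter
open scoped ENNReal NNReal Topology

noncomputable section

/-- The uniform distribution on `[0,1]`. -/
def unif01 : Measure ℝ := volume.restrict (Set.Icc (0:ℝ) 1)

/-- Truncation of a configuration to the box `Λ^N = {1,…,N}` (zero outside). -/
def trunc (N : ℕ) (w : ℤ → ℝ) : ℤ → ℝ :=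
  fun i => if 1 ≤ i ∧ i ≤ (N : ℤ) then w i else 0

/-- One step of the width-`N` silo dynamics with fractions `u` and added weights `v`. -/
def siloStep (N : ℕ) (u v w : ℤ → ℝ) : ℤ → ℝ :=
  trunc N fun i => v i + trunc N w (i + 1) * u (i + 1) + trunc N w (i - 1) * (1 - u (i - 1))

/-- `ν` is the product measure on `ℤ → ℝ` with all marginals `m`
(characterized through its finite-dimensional distributions). -/
def IsProductLaw (m : Measure ℝ) (ν : Measure (ℤ → ℝ)) : Prop :=
  IsProbabilityMeasure ν ∧
    ∀ I : Finset ℤ, ν.map (fun w (i : I) => w (i : ℤ)) = Measure.pi fun _ : I => m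

/-- The law on `ℤ → ℝ` which is iid `m` on the finite window `I` and `0` elsewhere. -/
def finExtLaw (I : Finset ℤ) (m : Measure ℝ) : Measure (ℤ → ℝ) :=
  (Measure.pi fun _ : I => m).map fun f i => if h : i ∈ I then f ⟨i, h⟩ else 0

/-- Law of the pair (fractions, weights) driving one step of the width-`N` silo. -/
def siloDriveLaw (N : ℕ) (νV : Measure ℝ) : Measure ((ℤ → ℝ) × (ℤ → ℝ)) :=
  (finExtLaw (Finset.Icc 0 ((N : ℤ) + 1)) unif01).prod (finExtLaw (Finset.Icc 1 (N : ℤ)) νV)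

/-- `μ` is carried by the state space `[0,∞)^{Λ^N}`. -/
def SiloSupported (N : ℕ) (μ : Measure (ℤ → ℝ)) : Prop :=
  μ {w | ∀ i : ℤ, 0 ≤ w i ∧ (¬(1 ≤ i ∧ i ≤ (N : ℤ)) → w i = 0)} = 1

/-- Hypotheses on the common law of the grain weights `V_t(i)`: a probability measure on
`[0,∞)` with mean `1` and finite variance. -/
def IsVLaw (νV : Measure ℝ) : Prop :=
  IsProbabilityMeasure νV ∧ νV {x | x < 0} = 0 ∧ (∫ x, x ∂νV) = 1 ∧
    Integrable (fun x => x ^ 2) νV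

/-- `μ` is an invariant probability measure for the width-`N` silo process. -/
def IsSiloInvariant (N : ℕ) (νV : Measure ℝ) (μ : Measure (ℤ → ℝ)) : Prop :=
  IsProbabilityMeasure μ ∧ SiloSupported N μ ∧
    (μ.prod (siloDriveLaw N νV)).map (fun p => siloStep N p.2.1 p.2.2 p.1) = μ

/-- The law of the silo process at time `t`, started from the distribution `μ0`. -/
def siloChainLaw (N : ℕ) (νV : Measure ℝ) (μ0 : Measure (ℤ → ℝ)) : ℕ → Measure (ℤ → ℝ)
  | 0 => μ0
  | t + 1 =>
      ((siloChainLaw N νV μ0 t).prod (siloDriveLaw N νV)).map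
        fun p => siloStep N p.2.1 p.2.2 p.1

/-- One step of the infinite silo model with fractions `u`. -/
def ismStep (u η : ℤ → ℝ) : ℤ → ℝ :=
  fun i => η (i - 1) * u (i - 1) + η (i + 1) * (1 - u (i + 1))

/-- `ν` is invariant for the infinite silo model. -/
def IsISMInvariant (ν : Measure (ℤ → ℝ)) : Prop :=
  ∀ κ : Measure (ℤ → ℝ), IsProductLaw unif01 κ →
    ((ν.prod κ).map fun p => ismStep p.2 p.1) = ν

/-- The shift `τ_1` on configurations. -/
def shift1 (η : ℤ → ℝ) : ℤ → ℝ := fun i => η (i - 1)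

/-- `ν` plays the role of `ν_ρ`: the product of Gamma(2, 2/ρ) laws for `ρ ≠ 0`,
and the point mass at the zero configuration for `ρ = 0`. -/
def IsNuRho (ρ : ℝ) (ν : Measure (ℤ → ℝ)) : Prop :=
  (ρ = 0 → ν = Measure.dirac fun _ => 0) ∧
    (ρ ≠ 0 → IsProductLaw (gammaMeasure 2 (2 / ρ)) ν)


namespace SiloPf


/-- weights -/
def aw (N : ℕ) (j : ℤ) : ℝ := (j : ℝ) * ((N : ℝ) + 1 - (j : ℝ))
def A (N : ℕ) (j : ℤ) : ℝ≥0∞ := ENNReal.ofReal (aw N j)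
def cc (N : ℕ) : ℝ≥0∞ := ENNReal.ofReal (1 - (((N : ℝ) + 1) ^ 2)⁻¹)

lemma aw_nonneg {N : ℕ} {j : ℤ} (h0 : 0 ≤ j) (h1 : j ≤ (N : ℤ) + 1) : 0 ≤ aw N j := by
  have h1' : (j : ℝ) ≤ (N : ℝ) + 1 := by exact_mod_cast h1
  have h0' : (0:ℝ) ≤ (j:ℝ) := by exact_mod_cast h0
  unfold aw; nlinarith

lemma aw_ge_one {N : ℕ} {j : ℤ} (h0 : 1 ≤ j) (h1 : j ≤ (N : ℤ)) : 1 ≤ aw N j := by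
  have h0' : (1:ℝ) ≤ (j:ℝ) := by exact_mod_cast h0
  have h1' : (j:ℝ) ≤ (N:ℝ) := by exact_mod_cast h1
  unfold aw; nlinarith

lemma inv_sq_lt {N : ℕ} (hN : 1 ≤ N) : (((N : ℝ) + 1) ^ 2)⁻¹ < 1 := by
  have h : (1:ℝ) ≤ (N:ℝ) := by exact_mod_cast hN
  have h2 : (1:ℝ) < ((N:ℝ)+1)^2 := by nlinarith
  rw [inv_lt_one_iff₀]; right; exact h2

lemma cc_pos {N : ℕ} (hN : 1 ≤ N) : 0 < cc N := by
  rw [cc, ENNReal.ofReal_pos]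
  linarith [inv_sq_lt hN]

lemma cc_lt_one {N : ℕ} : cc N < 1 := by
  rw [cc, ← ENNReal.ofReal_one]
  have hp : (0:ℝ) < (((N : ℝ) + 1) ^ 2)⁻¹ := by positivity
  exact ENNReal.ofReal_lt_ofReal_iff (by norm_num) |>.mpr (by linarith)

lemma cc_ne_top {N : ℕ} : cc N ≠ ⊤ := ENNReal.ofReal_ne_top

lemma key_ineq {N : ℕ} (hN : 1 ≤ N) {j : ℤ} (h0 : 1 ≤ j) (h1 : j ≤ (N : ℤ)) :
    aw N (j - 1) + aw N (j + 1) ≤ 2 * ((1 - (((N : ℝ) + 1) ^ 2)⁻¹) * aw N j) := by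
  have h0' : (1:ℝ) ≤ (j:ℝ) := by exact_mod_cast h0
  have h1' : (j:ℝ) ≤ (N:ℝ) := by exact_mod_cast h1
  have hsum : aw N (j-1) + aw N (j+1) = 2 * aw N j - 2 := by
    unfold aw; push_cast; ring
  have hup : aw N j ≤ ((N:ℝ)+1)^2 := by unfold aw; nlinarith
  have hpos2 : (0:ℝ) < ((N:ℝ)+1)^2 := by positivity
  have hkey : aw N j * (((N:ℝ)+1)^2)⁻¹ ≤ 1 := by
    rw [← div_eq_mul_inv, div_le_one hpos2]; exact hup
  rw [hsum]
  nlinarith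

/-- ENNReal form of the key inequality -/
lemma key_ineq' {N : ℕ} (hN : 1 ≤ N) {j : ℤ} (h0 : 1 ≤ j) (h1 : j ≤ (N : ℤ)) :
    A N (j - 1) + A N (j + 1) ≤ 2 * (cc N * A N j) := by
  have hm1 : 0 ≤ aw N (j-1) := aw_nonneg (by omega) (by omega)
  have hp1 : 0 ≤ aw N (j+1) := aw_nonneg (by omega) (by omega)
  have hc : 0 ≤ 1 - (((N : ℝ) + 1) ^ 2)⁻¹ := by linarith [inv_sq_lt hN]
  have ha : 0 ≤ aw N j := aw_nonneg (by omega) (by omega)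
  rw [A, A, A, cc, ← ENNReal.ofReal_add hm1 hp1, ← ENNReal.ofReal_mul hc,
    ← ENNReal.ofReal_ofNat, ← ENNReal.ofReal_mul (by norm_num)]
  exact ENNReal.ofReal_le_ofReal (key_ineq hN h0 h1)



instance unif01_prob : IsProbabilityMeasure unif01 := by
  constructor
  rw [unif01, Measure.restrict_apply MeasurableSet.univ, Set.univ_inter, Real.volume_Icc]
  norm_num

lemma measurable_finExt (I : Finset ℤ) :
    Measurable (fun (f : I → ℝ) (i : ℤ) => if h : i ∈ I then f ⟨i, h⟩ else 0) := by
  rw [measurable_pi_iff]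
  intro i
  by_cases h : i ∈ I
  · simpa [h] using measurable_pi_apply (⟨i, h⟩ : I)
  · simpa [h] using measurable_const

instance finExtLaw_prob (I : Finset ℤ) (m : Measure ℝ) [IsProbabilityMeasure m] :
    IsProbabilityMeasure (finExtLaw I m) :=
  Measure.isProbabilityMeasure_map (measurable_finExt I).aemeasurable

instance driveLaw_prob (N : ℕ) (νV : Measure ℝ) [IsProbabilityMeasure νV] :
    IsProbabilityMeasure (siloDriveLaw N νV) := by
  rw [siloDriveLaw]; infer_instance

/-- marginal of a finite product of probability measures -/
lemma pi_map_eval {κ : Type*} [Fintype κ] (m : Measure ℝ) [IsProbabilityMeasure m] (j : κ) :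
    (Measure.pi fun _ : κ => m).map (Function.eval j) = m := by
  classical
  ext s hs
  rw [Measure.map_apply (measurable_pi_apply j) hs, Set.eval_preimage,
    Measure.pi_pi]
  rw [Fintype.prod_eq_single j ?_]
  · simp
  · intro k hk; simp [Function.update_of_ne hk]

lemma lintegral_finExt_coord (I : Finset ℤ) (m : Measure ℝ) [IsProbabilityMeasure m]
    {j : ℤ} (hj : j ∈ I) (g : ℝ → ℝ≥0∞) (hg : Measurable g) :
    ∫⁻ w, g (w j) ∂(finExtLaw I m) = ∫⁻ x, g x ∂m := by
  rw [finExtLaw, lintegral_map (show Measurable fun w : ℤ → ℝ => g (w j) from hg.comp (measurable_pi_apply j)) (measurable_finExt I)]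
  simp only [dif_pos hj]
  calc ∫⁻ f : I → ℝ, g (f ⟨j, hj⟩) ∂(Measure.pi fun _ : I => m)
      = ∫⁻ x, g x ∂((Measure.pi fun _ : I => m).map (Function.eval (⟨j, hj⟩ : I))) :=
        (lintegral_map hg (measurable_pi_apply _)).symm
    _ = ∫⁻ x, g x ∂m := by rw [pi_map_eval]

/-- integral of a function of a single `u`-coordinate against the drive law -/
lemma lintegral_drive_u (N : ℕ) (νV : Measure ℝ) [IsProbabilityMeasure νV]
    {j : ℤ} (hj : j ∈ Finset.Icc 0 ((N : ℤ) + 1)) (g : ℝ → ℝ≥0∞) (hg : Measurable g) :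
    ∫⁻ p, g (p.1 j) ∂(siloDriveLaw N νV) = ∫⁻ x, g x ∂unif01 := by
  rw [siloDriveLaw]
  have h1 : ∫⁻ p : (ℤ → ℝ) × (ℤ → ℝ), g (p.1 j)
      ∂((finExtLaw (Finset.Icc 0 ((N : ℤ) + 1)) unif01).prod (finExtLaw (Finset.Icc 1 (N : ℤ)) νV))
      = ∫⁻ u, ∫⁻ _v, g (u j) ∂(finExtLaw (Finset.Icc 1 (N : ℤ)) νV) ∂(finExtLaw (Finset.Icc 0 ((N : ℤ) + 1)) unif01) :=
    lintegral_prod _ ((hg.comp ((measurable_pi_apply j).comp measurable_fst)).aemeasurable)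
  rw [h1]
  simp only [lintegral_const, measure_univ, mul_one]
  exact lintegral_finExt_coord _ _ hj g hg

lemma lintegral_unif01_id : ∫⁻ x, (‖x‖₊ : ℝ≥0∞) ∂unif01 = ENNReal.ofReal (1/2) := by
  have hcong : ∫⁻ x, (‖x‖₊ : ℝ≥0∞) ∂unif01 = ∫⁻ x, ENNReal.ofReal x ∂unif01 := by
    rw [unif01]
    refine setLIntegral_congr_fun measurableSet_Icc ?_
    intro x hx
    exact Real.enorm_eq_ofReal hx.1
  rw [hcong, ← ofReal_integral_eq_lintegral_ofReal]
  · rw [unif01, MeasureTheory.integral_Icc_eq_integral_Ioc,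
      ← intervalIntegral.integral_of_le (by norm_num : (0:ℝ) ≤ 1), integral_id]
    norm_num
  · exact (continuous_id.integrableOn_Icc).congr_fun (fun x _ => rfl) measurableSet_Icc
  · exact Filter.Eventually.mono (ae_restrict_mem measurableSet_Icc) (fun x hx => hx.1)

lemma lintegral_unif01_one_sub : ∫⁻ x, (‖1 - x‖₊ : ℝ≥0∞) ∂unif01 = ENNReal.ofReal (1/2) := by
  have hcong : ∫⁻ x, (‖1 - x‖₊ : ℝ≥0∞) ∂unif01 = ∫⁻ x, ENNReal.ofReal (1 - x) ∂unif01 := by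
    rw [unif01]
    refine setLIntegral_congr_fun measurableSet_Icc ?_
    intro x hx
    exact Real.enorm_eq_ofReal (r := 1 - x) (by linarith [hx.2])
  rw [hcong, ← ofReal_integral_eq_lintegral_ofReal]
  · rw [unif01, MeasureTheory.integral_Icc_eq_integral_Ioc,
      ← intervalIntegral.integral_of_le (by norm_num : (0:ℝ) ≤ 1)]
    rw [intervalIntegral.integral_sub intervalIntegrable_const intervalIntegral.intervalIntegrable_id]
    rw [integral_id, intervalIntegral.integral_const]
    norm_num
  · exact ((continuous_const.sub continuous_id).integrableOn_Icc).congr_fun (fun x _ => rfl) measurableSet_Icc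
  · exact Filter.Eventually.mono (ae_restrict_mem measurableSet_Icc) (fun x hx => by simp; linarith [hx.2])




/-- measurability of a generalized silo step -/
lemma measurable_siloStep_comp {α : Type*} [MeasurableSpace α] (N : ℕ)
    {u v w : α → ℤ → ℝ} (hu : Measurable u) (hv : Measurable v) (hw : Measurable w) :
    Measurable fun a => siloStep N (u a) (v a) (w a) := by
  rw [measurable_pi_iff]
  intro i
  have evu : ∀ j, Measurable fun a => u a j := fun j => (measurable_pi_apply j).comp hu
  have evv : ∀ j, Measurable fun a => v a j := fun j => (measurable_pi_apply j).comp hv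
  have evtw : ∀ j, Measurable fun a => trunc N (w a) j := by
    intro j
    by_cases h : 1 ≤ j ∧ j ≤ (N : ℤ)
    · simp only [trunc, if_pos h]; exact (measurable_pi_apply j).comp hw
    · simp only [trunc, if_neg h]; exact measurable_const
  by_cases h : 1 ≤ i ∧ i ≤ (N : ℤ)
  · simp only [siloStep, trunc, if_pos h]
    exact ((evv i).add ((evtw (i+1)).mul (evu (i+1)))).add
      ((evtw (i-1)).mul (measurable_const.sub (evu (i-1))))
  · simp only [siloStep]
    show Measurable fun a => trunc N _ i
    simp only [trunc, if_neg h]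
    exact measurable_const

lemma measurable_siloStep1 (N : ℕ) :
    Measurable (fun p : (ℤ → ℝ) × ((ℤ → ℝ) × (ℤ → ℝ)) => siloStep N p.2.1 p.2.2 p.1) :=
  measurable_siloStep_comp N (measurable_fst.comp measurable_snd)
    (measurable_snd.comp measurable_snd) measurable_fst

/-- the coupled two-point step -/
def pairStep (N : ℕ) (q : ((ℤ → ℝ) × (ℤ → ℝ)) × ((ℤ → ℝ) × (ℤ → ℝ))) : (ℤ → ℝ) × (ℤ → ℝ) :=
  (siloStep N q.2.1 q.2.2 q.1.1, siloStep N q.2.1 q.2.2 q.1.2)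

lemma measurable_pairStep (N : ℕ) : Measurable (pairStep N) :=
  (measurable_siloStep_comp N (measurable_fst.comp measurable_snd)
      (measurable_snd.comp measurable_snd) (measurable_fst.comp measurable_fst)).prodMk
    (measurable_siloStep_comp N (measurable_fst.comp measurable_snd)
      (measurable_snd.comp measurable_snd) (measurable_snd.comp measurable_fst))


/-- the weighted coupling distance -/
def DD (N : ℕ) (p : (ℤ → ℝ) × (ℤ → ℝ)) : ℝ≥0∞ :=
  ∑ i ∈ Finset.Icc (1 : ℤ) (N : ℤ), A N i * (‖p.1 i - p.2 i‖₊ : ℝ≥0∞)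

lemma measurable_DD (N : ℕ) : Measurable (DD N) := by
  apply Finset.measurable_sum
  intro i _
  exact (measurable_const.mul (((((measurable_pi_apply i).comp measurable_fst).sub
    ((measurable_pi_apply i).comp measurable_snd)).nnnorm).coe_nnreal_ennreal))

/-- the coupled chain -/
def cpl (N : ℕ) (νV : Measure ℝ) (W0 : ℤ → ℝ) (μ : Measure (ℤ → ℝ)) :
    ℕ → Measure ((ℤ → ℝ) × (ℤ → ℝ))
  | 0 => (Measure.dirac W0).prod μ
  | t + 1 => ((cpl N νV W0 μ t).prod (siloDriveLaw N νV)).map (pairStep N)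

lemma cpl_prob (N : ℕ) (νV : Measure ℝ) (W0 : ℤ → ℝ) (μ : Measure (ℤ → ℝ))
    [IsProbabilityMeasure νV] [IsProbabilityMeasure μ] (t : ℕ) :
    IsProbabilityMeasure (cpl N νV W0 μ t) := by
  induction t with
  | zero => rw [cpl]; infer_instance
  | succ t ih =>
    rw [cpl]
    have := ih
    exact Measure.isProbabilityMeasure_map (measurable_pairStep N).aemeasurable

lemma cpl_fst (N : ℕ) (νV : Measure ℝ) (W0 : ℤ → ℝ) (μ : Measure (ℤ → ℝ))
    [IsProbabilityMeasure νV] [IsProbabilityMeasure μ] (t : ℕ) :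
    (cpl N νV W0 μ t).map Prod.fst = siloChainLaw N νV (Measure.dirac W0) t := by
  induction t with
  | zero =>
    rw [cpl, siloChainLaw, Measure.map_fst_prod, measure_univ, one_smul]
  | succ t ih =>
    haveI := cpl_prob N νV W0 μ t
    rw [cpl, siloChainLaw, ← ih]
    rw [Measure.map_map measurable_fst (measurable_pairStep N)]
    have h1 : (Prod.fst ∘ pairStep N) =
        (fun p : (ℤ → ℝ) × ((ℤ → ℝ) × (ℤ → ℝ)) => siloStep N p.2.1 p.2.2 p.1) ∘
          (Prod.map (Prod.fst : (ℤ→ℝ)×(ℤ→ℝ) → (ℤ→ℝ)) (id : (ℤ→ℝ)×(ℤ→ℝ) → (ℤ→ℝ)×(ℤ→ℝ))) := rfl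
    rw [h1, ← Measure.map_map (measurable_siloStep1 N) (measurable_fst.prodMap measurable_id)]
    congr 1
    rw [← Measure.map_prod_map _ _ measurable_fst measurable_id, Measure.map_id]

lemma cpl_snd (N : ℕ) (νV : Measure ℝ) (W0 : ℤ → ℝ) (μ : Measure (ℤ → ℝ))
    [IsProbabilityMeasure νV] [IsProbabilityMeasure μ]
    (hinv : (μ.prod (siloDriveLaw N νV)).map (fun p => siloStep N p.2.1 p.2.2 p.1) = μ) (t : ℕ) :
    (cpl N νV W0 μ t).map Prod.snd = μ := by
  induction t with
  | zero =>
    rw [cpl, Measure.map_snd_prod, measure_univ, one_smul]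
  | succ t ih =>
    haveI := cpl_prob N νV W0 μ t
    rw [cpl, Measure.map_map measurable_snd (measurable_pairStep N)]
    have h1 : (Prod.snd ∘ pairStep N) =
        (fun p : (ℤ → ℝ) × ((ℤ → ℝ) × (ℤ → ℝ)) => siloStep N p.2.1 p.2.2 p.1) ∘
          (Prod.map (Prod.snd : (ℤ→ℝ)×(ℤ→ℝ) → (ℤ→ℝ)) (id : (ℤ→ℝ)×(ℤ→ℝ) → (ℤ→ℝ)×(ℤ→ℝ))) := rfl
    rw [h1, ← Measure.map_map (measurable_siloStep1 N) (measurable_snd.prodMap measurable_id)]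
    rw [← Measure.map_prod_map _ _ measurable_snd measurable_id, Measure.map_id, ih]
    exact hinv

-- new content
lemma trunc_zero_of_not_mem {N : ℕ} {j : ℤ} (h : ¬(1 ≤ j ∧ j ≤ (N : ℤ))) (w : ℤ → ℝ) :
    trunc N w j = 0 := by simp [trunc, h]

lemma trunc_of_mem {N : ℕ} {j : ℤ} (h : 1 ≤ j ∧ j ≤ (N : ℤ)) (w : ℤ → ℝ) :
    trunc N w j = w j := by simp [trunc, h]

lemma step_eq (N : ℕ) (u v w : ℤ → ℝ) {i : ℤ} (hi : 1 ≤ i ∧ i ≤ (N : ℤ)) :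
    siloStep N u v w i =
      v i + trunc N w (i+1) * u (i+1) + trunc N w (i-1) * (1 - u (i-1)) := by
  show trunc N (fun i => v i + trunc N w (i + 1) * u (i + 1) +
    trunc N w (i - 1) * (1 - u (i - 1))) i = _
  rw [trunc_of_mem hi]

lemma step_diff (N : ℕ) (u v x y : ℤ → ℝ) {i : ℤ} (hi : 1 ≤ i ∧ i ≤ (N : ℤ)) :
    siloStep N u v x i - siloStep N u v y i =
      (trunc N x (i+1) - trunc N y (i+1)) * u (i+1) +
      (trunc N x (i-1) - trunc N y (i-1)) * (1 - u (i-1)) := by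
  rw [step_eq N u v x hi, step_eq N u v y hi]
  ring

lemma nnnorm_step_diff (N : ℕ) (u v x y : ℤ → ℝ) {i : ℤ} (hi : 1 ≤ i ∧ i ≤ (N : ℤ)) :
    (‖siloStep N u v x i - siloStep N u v y i‖₊ : ℝ≥0∞) ≤
      (‖trunc N x (i+1) - trunc N y (i+1)‖₊ : ℝ≥0∞) * ‖u (i+1)‖₊ +
      (‖trunc N x (i-1) - trunc N y (i-1)‖₊ : ℝ≥0∞) * ‖1 - u (i-1)‖₊ := by
  rw [step_diff N u v x y hi]
  calc (‖_ + _‖₊ : ℝ≥0∞) ≤ (‖(trunc N x (i+1) - trunc N y (i+1)) * u (i+1)‖₊ : ℝ≥0∞) +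
        ‖(trunc N x (i-1) - trunc N y (i-1)) * (1 - u (i-1))‖₊ := by
        exact_mod_cast nnnorm_add_le _ _
    _ = _ := by rw [nnnorm_mul, nnnorm_mul]; push_cast; ring

/-- The heart: one-step expected contraction of the coupling distance. -/
lemma drive_contraction {N : ℕ} (hN : 1 ≤ N) (νV : Measure ℝ) [IsProbabilityMeasure νV]
    (x y : ℤ → ℝ) :
    ∫⁻ q, DD N (siloStep N q.1 q.2 x, siloStep N q.1 q.2 y) ∂(siloDriveLaw N νV)
      ≤ cc N * DD N (x, y) := by
  classical
  set Δ : ℤ → ℝ≥0∞ := fun j => (‖trunc N x j - trunc N y j‖₊ : ℝ≥0∞) with hΔ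
  have hΔ_zero : ∀ j, ¬(1 ≤ j ∧ j ≤ (N:ℤ)) → Δ j = 0 := by
    intro j hj
    simp [hΔ, trunc_zero_of_not_mem hj]
  have hΔ_box : ∀ j, (1 ≤ j ∧ j ≤ (N:ℤ)) → Δ j = (‖x j - y j‖₊ : ℝ≥0∞) := by
    intro j hj
    simp [hΔ, trunc, if_pos hj]
  -- pointwise bound
  have hpt : ∀ q : (ℤ → ℝ) × (ℤ → ℝ),
      DD N (siloStep N q.1 q.2 x, siloStep N q.1 q.2 y) ≤
        ∑ i ∈ Finset.Icc (1:ℤ) (N:ℤ),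
          (A N i * (Δ (i+1) * ‖q.1 (i+1)‖₊) + A N i * (Δ (i-1) * ‖1 - q.1 (i-1)‖₊)) := by
    intro q
    rw [DD]
    apply Finset.sum_le_sum
    intro i hi
    rw [Finset.mem_Icc] at hi
    calc A N i * (‖siloStep N q.1 q.2 x i - siloStep N q.1 q.2 y i‖₊ : ℝ≥0∞)
        ≤ A N i * (Δ (i+1) * ‖q.1 (i+1)‖₊ + Δ (i-1) * ‖1 - q.1 (i-1)‖₊) :=
          mul_le_mul_right (nnnorm_step_diff N q.1 q.2 x y hi) _
      _ = _ := by ring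
  -- integrate
  have hmeas1 : ∀ i : ℤ, Measurable fun q : (ℤ → ℝ) × (ℤ → ℝ) => (‖q.1 i‖₊ : ℝ≥0∞) :=
    fun i => ((measurable_pi_apply i).comp measurable_fst).nnnorm.coe_nnreal_ennreal
  have hmeas2 : ∀ i : ℤ, Measurable fun q : (ℤ → ℝ) × (ℤ → ℝ) => (‖1 - q.1 i‖₊ : ℝ≥0∞) :=
    fun i => ((measurable_const.sub ((measurable_pi_apply i).comp measurable_fst))).nnnorm.coe_nnreal_ennreal
  have step1 : ∫⁻ q, DD N (siloStep N q.1 q.2 x, siloStep N q.1 q.2 y) ∂(siloDriveLaw N νV)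
      ≤ ∑ i ∈ Finset.Icc (1:ℤ) (N:ℤ),
          (A N i * Δ (i+1) * ENNReal.ofReal (1/2) + A N i * Δ (i-1) * ENNReal.ofReal (1/2)) := by
    refine le_trans (lintegral_mono hpt) ?_
    rw [lintegral_finset_sum]
    · apply le_of_eq
      apply Finset.sum_congr rfl
      intro i hi
      rw [Finset.mem_Icc] at hi
      rw [lintegral_add_left (((hmeas1 (i+1)).const_mul _).const_mul _)]
      rw [lintegral_const_mul _ ((hmeas1 (i+1)).const_mul _),
          lintegral_const_mul _ ((hmeas2 (i-1)).const_mul _),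
          lintegral_const_mul _ (hmeas1 (i+1)), lintegral_const_mul _ (hmeas2 (i-1))]
      rw [lintegral_drive_u N νV (by rw [Finset.mem_Icc]; omega) _ measurable_nnnorm.coe_nnreal_ennreal]
      rw [lintegral_drive_u N νV (by rw [Finset.mem_Icc]; omega)
          (fun r => (‖1 - r‖₊ : ℝ≥0∞)) ((measurable_const.sub measurable_id).nnnorm.coe_nnreal_ennreal)]
      rw [lintegral_unif01_id, lintegral_unif01_one_sub]
      ring
    · intro i hi
      exact (measurable_const.mul (measurable_const.mul (hmeas1 (i+1)))).add
        (measurable_const.mul (measurable_const.mul (hmeas2 (i-1))))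
  -- reindex
  have reindex1 : ∑ i ∈ Finset.Icc (1:ℤ) (N:ℤ), A N i * Δ (i+1)
      = ∑ j ∈ Finset.Icc (1:ℤ) (N:ℤ), A N (j-1) * Δ j := by
    have e1 : ∑ i ∈ Finset.Icc (1:ℤ) (N:ℤ), A N i * Δ (i+1)
        = ∑ j ∈ Finset.Icc (2:ℤ) ((N:ℤ)+1), A N (j-1) * Δ j := by
      apply Finset.sum_nbij' (fun i => i + 1) (fun j => j - 1) <;>
        simp only [Finset.mem_Icc] <;> intros <;> first | omega | (congr 1; omega) | ring_nf
    rw [e1]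
    have sub1 : Finset.Icc (2:ℤ) ((N:ℤ)+1) ⊆ Finset.Icc (1:ℤ) ((N:ℤ)+1) := by
      apply Finset.Icc_subset_Icc <;> omega
    have sub2 : Finset.Icc (1:ℤ) (N:ℤ) ⊆ Finset.Icc (1:ℤ) ((N:ℤ)+1) := by
      apply Finset.Icc_subset_Icc <;> omega
    rw [Finset.sum_subset sub1, Finset.sum_subset sub2]
    · intro j hj hnj
      rw [Finset.mem_Icc] at hj; rw [Finset.mem_Icc] at hnj
      have : j = (N:ℤ)+1 := by omega
      rw [hΔ_zero j (by omega), mul_zero]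
    · intro j hj hnj
      rw [Finset.mem_Icc] at hj; rw [Finset.mem_Icc] at hnj
      have : j = 1 := by omega
      subst this
      have : A N 0 = 0 := by simp [A, aw]
      simp [this]
  have reindex2 : ∑ i ∈ Finset.Icc (1:ℤ) (N:ℤ), A N i * Δ (i-1)
      = ∑ j ∈ Finset.Icc (1:ℤ) (N:ℤ), A N (j+1) * Δ j := by
    have e1 : ∑ i ∈ Finset.Icc (1:ℤ) (N:ℤ), A N i * Δ (i-1)
        = ∑ j ∈ Finset.Icc (0:ℤ) ((N:ℤ)-1), A N (j+1) * Δ j := by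
      apply Finset.sum_nbij' (fun i => i - 1) (fun j => j + 1) <;>
        simp only [Finset.mem_Icc] <;> intros <;> first | omega | (congr 1; omega) | ring_nf
    rw [e1]
    have sub1 : Finset.Icc (0:ℤ) ((N:ℤ)-1) ⊆ Finset.Icc (0:ℤ) (N:ℤ) := by
      apply Finset.Icc_subset_Icc <;> omega
    have sub2 : Finset.Icc (1:ℤ) (N:ℤ) ⊆ Finset.Icc (0:ℤ) (N:ℤ) := by
      apply Finset.Icc_subset_Icc <;> omega
    rw [Finset.sum_subset sub1, Finset.sum_subset sub2]
    · intro j hj hnj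
      rw [Finset.mem_Icc] at hj; rw [Finset.mem_Icc] at hnj
      have : j = 0 := by omega
      rw [hΔ_zero j (by omega), mul_zero]
    · intro j hj hnj
      rw [Finset.mem_Icc] at hj; rw [Finset.mem_Icc] at hnj
      have hj' : j = (N:ℤ) := by omega
      subst hj'
      have : A N ((N:ℤ)+1) = 0 := by
        simp only [A, aw]
        rw [ENNReal.ofReal_eq_zero]
        push_cast; nlinarith [sq_nonneg ((N:ℝ))]
      simp [this]
  -- combine
  refine le_trans step1 ?_
  have combined : ∑ i ∈ Finset.Icc (1:ℤ) (N:ℤ),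
      (A N i * Δ (i+1) * ENNReal.ofReal (1/2) + A N i * Δ (i-1) * ENNReal.ofReal (1/2))
      = ∑ j ∈ Finset.Icc (1:ℤ) (N:ℤ), (A N (j-1) + A N (j+1)) * ENNReal.ofReal (1/2) * Δ j := by
    rw [Finset.sum_add_distrib, ← Finset.sum_mul, ← Finset.sum_mul, reindex1, reindex2,
      ← add_mul, ← Finset.sum_add_distrib, Finset.sum_mul]
    apply Finset.sum_congr rfl
    intro j _
    ring
  rw [combined, DD]
  rw [Finset.mul_sum]
  apply Finset.sum_le_sum
  intro j hj
  rw [Finset.mem_Icc] at hj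
  rw [hΔ_box j hj]
  have hkey := key_ineq' hN hj.1 hj.2
  have h2 : (A N (j-1) + A N (j+1)) * ENNReal.ofReal (1/2) ≤
      2 * (cc N * A N j) * ENNReal.ofReal (1/2) := mul_le_mul_left hkey _
  have h3 : (2 : ℝ≥0∞) * (cc N * A N j) * ENNReal.ofReal (1/2) = cc N * A N j := by
    rw [mul_comm (2 : ℝ≥0∞) (cc N * A N j), mul_assoc]
    have : (2 : ℝ≥0∞) * ENNReal.ofReal (1/2) = 1 := by
      rw [← ENNReal.ofReal_ofNat, ← ENNReal.ofReal_mul (by norm_num)]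
      norm_num
    rw [this, mul_one]
  calc (A N (j-1) + A N (j+1)) * ENNReal.ofReal (1/2) * (‖x j - y j‖₊ : ℝ≥0∞)
      ≤ cc N * A N j * (‖x j - y j‖₊ : ℝ≥0∞) := by
        rw [← h3]; exact mul_le_mul_left h2 _
    _ = cc N * (A N j * (‖x j - y j‖₊ : ℝ≥0∞)) := by ring

-- new content

lemma DD_ne_top (N : ℕ) (p : (ℤ → ℝ) × (ℤ → ℝ)) : DD N p ≠ ⊤ := by
  rw [DD]
  refine (ENNReal.sum_lt_top.mpr ?_).ne
  intro i _
  exact ENNReal.mul_lt_top ENNReal.ofReal_lt_top ENNReal.coe_lt_top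

lemma min_mul_bound {c M d : ℝ≥0∞} (hc0 : c ≠ 0) (hct : c ≠ ⊤) :
    min (c * d) M ≤ c * min d (M / c) := by
  rcases le_total d (M / c) with h | h
  · rw [min_eq_left h]; exact min_le_left _ _
  · rw [min_eq_right h, ENNReal.mul_div_cancel hc0 hct]; exact min_le_right _ _

lemma cpl_step_min {N : ℕ} (hN : 1 ≤ N) (νV : Measure ℝ) [IsProbabilityMeasure νV]
    (Λ : Measure ((ℤ → ℝ) × (ℤ → ℝ))) [IsProbabilityMeasure Λ] (M : ℝ≥0∞) :
    ∫⁻ p, min (DD N p) M ∂((Λ.prod (siloDriveLaw N νV)).map (pairStep N))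
      ≤ cc N * ∫⁻ p, min (DD N p) (M / cc N) ∂Λ := by
  rw [lintegral_map ((measurable_DD N).min measurable_const) (measurable_pairStep N)]
  rw [lintegral_prod _ (show Measurable fun q : ((ℤ → ℝ) × (ℤ → ℝ)) × ((ℤ → ℝ) × (ℤ → ℝ)) =>
    min (DD N (pairStep N q)) M from
    ((measurable_DD N).comp (measurable_pairStep N)).min measurable_const).aemeasurable]
  have inner : ∀ p : (ℤ → ℝ) × (ℤ → ℝ),
      ∫⁻ q, min (DD N (pairStep N (p, q))) M ∂(siloDriveLaw N νV)
        ≤ cc N * min (DD N p) (M / cc N) := by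
    intro p
    have h1 : ∫⁻ q, min (DD N (pairStep N (p, q))) M ∂(siloDriveLaw N νV)
        ≤ min (∫⁻ q, DD N (pairStep N (p, q)) ∂(siloDriveLaw N νV)) M :=
      le_min (lintegral_mono fun q => min_le_left _ _)
        (le_trans (lintegral_mono fun q => min_le_right _ _) (by simp))
    refine h1.trans ?_
    have h2 : ∫⁻ q, DD N (pairStep N (p, q)) ∂(siloDriveLaw N νV) ≤ cc N * DD N p := by
      have : ∀ q : (ℤ → ℝ) × (ℤ → ℝ),
          DD N (pairStep N (p, q)) = DD N (siloStep N q.1 q.2 p.1, siloStep N q.1 q.2 p.2) := by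
        intro q; rfl
      simp_rw [this]
      exact drive_contraction hN νV p.1 p.2
    refine le_trans (min_le_min_right _ h2) ?_
    exact min_mul_bound (cc_pos hN).ne' cc_ne_top
  refine le_trans (lintegral_mono inner) ?_
  rw [lintegral_const_mul _ ((measurable_DD N).min measurable_const)]

lemma cpl_min_contraction {N : ℕ} (hN : 1 ≤ N) (νV : Measure ℝ) (W0 : ℤ → ℝ)
    (μ : Measure (ℤ → ℝ)) [IsProbabilityMeasure νV] [IsProbabilityMeasure μ] (t : ℕ) :
    ∀ M : ℝ≥0∞, ∫⁻ p, min (DD N p) (cc N ^ t * M) ∂(cpl N νV W0 μ t)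
      ≤ cc N ^ t * ∫⁻ p, min (DD N p) M ∂(cpl N νV W0 μ 0) := by
  induction t with
  | zero => intro M; simp
  | succ t ih =>
    intro M
    have hc0 : cc N ≠ 0 := (cc_pos hN).ne'
    haveI := cpl_prob N νV W0 μ t
    have hdiv : cc N ^ (t+1) * M / cc N = cc N ^ t * M := by
      rw [pow_succ', mul_assoc, mul_comm (cc N) (cc N ^ t * M), mul_div_assoc,
        ENNReal.div_self hc0 cc_ne_top, mul_one]
    calc ∫⁻ p, min (DD N p) (cc N ^ (t+1) * M) ∂(cpl N νV W0 μ (t+1))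
        ≤ cc N * ∫⁻ p, min (DD N p) (cc N ^ (t+1) * M / cc N) ∂(cpl N νV W0 μ t) := by
          rw [cpl]; exact cpl_step_min hN νV _ _
      _ = cc N * ∫⁻ p, min (DD N p) (cc N ^ t * M) ∂(cpl N νV W0 μ t) := by rw [hdiv]
      _ ≤ cc N * (cc N ^ t * ∫⁻ p, min (DD N p) M ∂(cpl N νV W0 μ 0)) :=
          mul_le_mul_right (ih M) _
      _ = cc N ^ (t+1) * ∫⁻ p, min (DD N p) M ∂(cpl N νV W0 μ 0) := by
          rw [pow_succ', mul_assoc]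

/-- the coupling distance tends to `0` in probability -/
lemma cpl_tail {N : ℕ} (hN : 1 ≤ N) (νV : Measure ℝ) (W0 : ℤ → ℝ)
    (μ : Measure (ℤ → ℝ)) [IsProbabilityMeasure νV] [IsProbabilityMeasure μ]
    {δ : ℝ≥0∞} (hδ0 : δ ≠ 0) (hδt : δ ≠ ⊤) :
    Tendsto (fun t => (cpl N νV W0 μ t) {p | δ < DD N p}) atTop (𝓝 0) := by
  have hc0 : cc N ≠ 0 := (cc_pos hN).ne'
  have hct : cc N ≠ ⊤ := cc_ne_top
  have markov : ∀ t, (cpl N νV W0 μ t) {p | δ < DD N p}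
      ≤ δ⁻¹ * ∫⁻ p, min (DD N p) δ ∂(cpl N νV W0 μ t) := by
    intro t
    have h := mul_meas_ge_le_lintegral₀ (μ := cpl N νV W0 μ t)
      (f := fun p => min (DD N p) δ)
      ((measurable_DD N).min measurable_const).aemeasurable δ
    have hsub : {p | δ < DD N p} ⊆ {p | δ ≤ min (DD N p) δ} :=
      fun p hp => show δ ≤ min (DD N p) δ from le_min (le_of_lt hp) le_rfl
    calc (cpl N νV W0 μ t) {p | δ < DD N p}
        ≤ (cpl N νV W0 μ t) {p | δ ≤ min (DD N p) δ} := measure_mono hsub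
      _ = δ⁻¹ * (δ * (cpl N νV W0 μ t) {p | δ ≤ min (DD N p) δ}) := by
          rw [← mul_assoc, ENNReal.inv_mul_cancel hδ0 hδt, one_mul]
      _ ≤ δ⁻¹ * ∫⁻ p, min (DD N p) δ ∂(cpl N νV W0 μ t) := mul_le_mul_right h _
  have hbound : ∀ t, (cpl N νV W0 μ t) {p | δ < DD N p}
      ≤ δ⁻¹ * (cc N ^ t * ∫⁻ p, min (DD N p) (δ / cc N ^ t) ∂(cpl N νV W0 μ 0)) := by
    intro t
    refine (markov t).trans (mul_le_mul_right ?_ _)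
    have hrw : δ = cc N ^ t * (δ / cc N ^ t) :=
      (ENNReal.mul_div_cancel (pow_ne_zero t hc0) (ENNReal.pow_ne_top hct)).symm
    calc ∫⁻ p, min (DD N p) δ ∂(cpl N νV W0 μ t)
        = ∫⁻ p, min (DD N p) (cc N ^ t * (δ / cc N ^ t)) ∂(cpl N νV W0 μ t) := by rw [← hrw]
      _ ≤ cc N ^ t * ∫⁻ p, min (DD N p) (δ / cc N ^ t) ∂(cpl N νV W0 μ 0) :=
          cpl_min_contraction hN νV W0 μ t _
  have hcpl0 : ∀ K, ∫⁻ p, min (DD N p) K ∂(cpl N νV W0 μ 0)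
      = ∫⁻ y, min (DD N (W0, y)) K ∂μ := by
    intro K
    rw [cpl, Measure.dirac_prod,
      lintegral_map ((measurable_DD N).min measurable_const) measurable_prodMk_left]
  have key : Tendsto (fun t => cc N ^ t * ∫⁻ p, min (DD N p) (δ / cc N ^ t) ∂(cpl N νV W0 μ 0))
      atTop (𝓝 0) := by
    simp_rw [hcpl0]
    have heq : ∀ t, cc N ^ t * ∫⁻ y, min (DD N (W0, y)) (δ / cc N ^ t) ∂μ
        = ∫⁻ y, min (cc N ^ t * DD N (W0, y)) δ ∂μ := by
      intro t
      rw [← lintegral_const_mul _ (show Measurable fun y : ℤ → ℝ =>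
        min (DD N (W0, y)) (δ / cc N ^ t) from
        ((measurable_DD N).comp measurable_prodMk_left).min measurable_const)]
      congr 1; funext y
      rcases le_total (DD N (W0, y)) (δ / cc N ^ t) with h | h
      · rw [min_eq_left h, min_eq_left]
        calc cc N ^ t * DD N (W0, y) ≤ cc N ^ t * (δ / cc N ^ t) := mul_le_mul_right h _
          _ = δ := ENNReal.mul_div_cancel (pow_ne_zero t hc0) (ENNReal.pow_ne_top hct)
      · rw [min_eq_right h, min_eq_right, ENNReal.mul_div_cancel (pow_ne_zero t hc0)
          (ENNReal.pow_ne_top hct)]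
        calc δ = cc N ^ t * (δ / cc N ^ t) :=
              (ENNReal.mul_div_cancel (pow_ne_zero t hc0) (ENNReal.pow_ne_top hct)).symm
          _ ≤ cc N ^ t * DD N (W0, y) := mul_le_mul_right h _
    simp_rw [heq]
    have hdct := tendsto_lintegral_of_dominated_convergence (μ := μ)
      (F := fun n y => min (cc N ^ n * DD N (W0, y)) δ) (f := fun _ => 0)
      (bound := fun _ => δ)
      (fun n => (measurable_const.mul ((measurable_DD N).comp measurable_prodMk_left)).min
        measurable_const)
      (fun n => Filter.Eventually.of_forall fun y => min_le_right _ _)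
      (by simp [hδt]) ?_
    · simpa using hdct
    · refine Filter.Eventually.of_forall fun y => ?_
      have h1 : Tendsto (fun n => cc N ^ n * DD N (W0, y)) atTop (𝓝 0) := by
        have := ENNReal.Tendsto.mul_const
          (ENNReal.tendsto_pow_atTop_nhds_zero_of_lt_one (cc_lt_one (N := N)))
          (Or.inr (DD_ne_top N (W0, y)))
        simpa using this
      have h2 : ∀ n, min (cc N ^ n * DD N (W0, y)) δ ≤ cc N ^ n * DD N (W0, y) :=
        fun n => min_le_left _ _
      exact tendsto_of_tendsto_of_tendsto_of_le_of_le tendsto_const_nhds h1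
        (fun n => zero_le) h2
  have final : Tendsto (fun t => δ⁻¹ * (cc N ^ t *
      ∫⁻ p, min (DD N p) (δ / cc N ^ t) ∂(cpl N νV W0 μ 0))) atTop (𝓝 0) := by
    have := ENNReal.Tendsto.const_mul key (Or.inr (ENNReal.inv_ne_top.mpr hδ0))
    simpa using this
  exact tendsto_of_tendsto_of_tendsto_of_le_of_le tendsto_const_nhds final
    (fun t => zero_le) hbound

-- ======= part 6: support set and final assembly =======

/-- configurations vanishing outside the box -/
def SS (N : ℕ) : Set (ℤ → ℝ) := {w | ∀ i : ℤ, ¬(1 ≤ i ∧ i ≤ (N : ℤ)) → w i = 0}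

lemma measurableSet_SS (N : ℕ) : MeasurableSet (SS N) := by
  have : SS N = ⋂ i : ℤ, {w : ℤ → ℝ | ¬(1 ≤ i ∧ i ≤ (N : ℤ)) → w i = 0} := by
    ext w; simp [SS, Set.mem_iInter]
  rw [this]
  refine MeasurableSet.iInter fun i => ?_
  by_cases h : 1 ≤ i ∧ i ≤ (N : ℤ)
  · have : {w : ℤ → ℝ | ¬(1 ≤ i ∧ i ≤ (N : ℤ)) → w i = 0} = Set.univ := by
      ext w; simp [h]
    rw [this]; exact MeasurableSet.univ
  · have : {w : ℤ → ℝ | ¬(1 ≤ i ∧ i ≤ (N : ℤ)) → w i = 0} = (fun w : ℤ → ℝ => w i) ⁻¹' {0} := by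
      ext w; simp [h]
    rw [this]; exact (measurable_pi_apply i) (measurableSet_singleton 0)

lemma step_mem_SS (N : ℕ) (u v w : ℤ → ℝ) : siloStep N u v w ∈ SS N :=
  fun _i hi => trunc_zero_of_not_mem hi _

lemma measurableSet_SSprod (N : ℕ) :
    MeasurableSet {p : (ℤ → ℝ) × (ℤ → ℝ) | p.1 ∈ SS N ∧ p.2 ∈ SS N} :=
  (measurable_fst (measurableSet_SS N)).inter (measurable_snd (measurableSet_SS N))

lemma cpl_ae_SS (N : ℕ) (νV : Measure ℝ) (W0 : ℤ → ℝ) (μ : Measure (ℤ → ℝ))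
    [IsProbabilityMeasure νV] [IsProbabilityMeasure μ]
    (hW0 : W0 ∈ SS N) (hμSS : ∀ᵐ y ∂μ, y ∈ SS N) (t : ℕ) :
    ∀ᵐ p ∂(cpl N νV W0 μ t), p.1 ∈ SS N ∧ p.2 ∈ SS N := by
  cases t with
  | zero =>
    rw [cpl, Measure.dirac_prod]
    rw [ae_map_iff measurable_prodMk_left.aemeasurable (measurableSet_SSprod N)]
    filter_upwards [hμSS] with y hy
    exact ⟨hW0, hy⟩
  | succ t =>
    haveI := cpl_prob N νV W0 μ t
    rw [cpl, ae_map_iff (measurable_pairStep N).aemeasurable (measurableSet_SSprod N)]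
    exact Filter.Eventually.of_forall fun q => ⟨step_mem_SS _ _ _ _, step_mem_SS _ _ _ _⟩

lemma mu_ae_SS (N : ℕ) (μ : Measure (ℤ → ℝ)) [IsProbabilityMeasure μ]
    (hsupp : SiloSupported N μ) : ∀ᵐ y ∂μ, y ∈ SS N := by
  have hsub : {w : ℤ → ℝ | ∀ i : ℤ, 0 ≤ w i ∧ (¬(1 ≤ i ∧ i ≤ (N : ℤ)) → w i = 0)} ⊆ SS N :=
    fun w hw i hi => (hw i).2 hi
  have h1 : μ (SS N) = 1 := le_antisymm prob_le_one (hsupp ▸ measure_mono hsub)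
  have h2 : μ (SS N)ᶜ = 0 := by
    rw [measure_compl (measurableSet_SS N) (measure_ne_top μ _), h1, measure_univ]
    simp
  exact ae_iff.mpr h2

section Final

variable (N : ℕ)

/-- the finite box index type -/
abbrev Box := {i : ℤ // i ∈ Finset.Icc (1 : ℤ) (N : ℤ)}

def rmap (w : ℤ → ℝ) : Box N → ℝ := fun i => w i.1

def emap (x : Box N → ℝ) : ℤ → ℝ :=
  fun j => if h : j ∈ Finset.Icc (1 : ℤ) (N : ℤ) then x ⟨j, h⟩ else 0

lemma continuous_emap : Continuous (emap N) := by
  apply continuous_pi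
  intro j
  by_cases h : j ∈ Finset.Icc (1 : ℤ) (N : ℤ)
  · simpa [emap, h] using continuous_apply (⟨j, h⟩ : Box N)
  · simpa [emap, h] using continuous_const

lemma emap_rmap {w : ℤ → ℝ} (hw : w ∈ SS N) : emap N (rmap N w) = w := by
  funext j
  by_cases h : j ∈ Finset.Icc (1 : ℤ) (N : ℤ)
  · simp [emap, rmap, h]
  · simp only [emap, dif_neg h]
    exact (hw j (by simpa [Finset.mem_Icc] using h)).symm

end Final


end SiloPf

open SiloPf

set_option maxHeartbeats 1000000 in
/-- Started from any deterministic configuration `W₀ ∈ [0,∞)^{Λ^N}`, the law of the silo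
process at time `t` converges weakly, as `t → ∞`, to the (unique) invariant measure. -/
theorem silo_convergence_to_invariant_measure (N : ℕ) (hN : 1 ≤ N)
    (νV : Measure ℝ) (hνV : IsVLaw νV)
    (W0 : ℤ → ℝ) (hW0 : ∀ i : ℤ, 0 ≤ W0 i ∧ (¬(1 ≤ i ∧ i ≤ (N : ℤ)) → W0 i = 0))
    (μ : Measure (ℤ → ℝ)) (hμ : IsSiloInvariant N νV μ) :
    ∀ f : BoundedContinuousFunction (ℤ → ℝ) ℝ,
      Filter.Tendsto (fun t => ∫ w, f w ∂(siloChainLaw N νV (Measure.dirac W0) t))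
        Filter.atTop (nhds (∫ w, f w ∂μ)) := by
  intro f
  obtain ⟨hμprob, hμsupp, hinv⟩ := hμ
  obtain ⟨hνprob, -, -, -⟩ := hνV
  have hW0SS : W0 ∈ SS N := fun i hi => (hW0 i).2 hi
  have hμSS : ∀ᵐ y ∂μ, y ∈ SS N := mu_ae_SS N μ hμsupp
  haveI : ∀ t, IsProbabilityMeasure (cpl N νV W0 μ t) := cpl_prob N νV W0 μ
  have hfm : Measurable (f : (ℤ → ℝ) → ℝ) := f.continuous.measurable
  -- integrability of compositions
  have hint1 : ∀ t, Integrable (fun p : (ℤ → ℝ) × (ℤ → ℝ) => f p.1) (cpl N νV W0 μ t) := by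
    intro t
    refine Integrable.mono' (integrable_const ‖f‖) ((hfm.comp measurable_fst).aestronglyMeasurable)
      (Filter.Eventually.of_forall fun p => f.norm_coe_le_norm p.1)
  have hint2 : ∀ t, Integrable (fun p : (ℤ → ℝ) × (ℤ → ℝ) => f p.2) (cpl N νV W0 μ t) := by
    intro t
    refine Integrable.mono' (integrable_const ‖f‖) ((hfm.comp measurable_snd).aestronglyMeasurable)
      (Filter.Eventually.of_forall fun p => f.norm_coe_le_norm p.2)
  -- difference formula
  have hdiff : ∀ t, ∫ w, f w ∂(siloChainLaw N νV (Measure.dirac W0) t) - ∫ w, f w ∂μ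
      = ∫ p, (f p.1 - f p.2) ∂(cpl N νV W0 μ t) := by
    intro t
    have e1 : ∫ w, f w ∂(siloChainLaw N νV (Measure.dirac W0) t)
        = ∫ p : (ℤ → ℝ) × (ℤ → ℝ), f p.1 ∂(cpl N νV W0 μ t) := by
      have h := integral_map (φ := (Prod.fst : (ℤ → ℝ) × (ℤ → ℝ) → ℤ → ℝ))
        (μ := cpl N νV W0 μ t) measurable_fst.aemeasurable
        (f := fun w => f w) (by rw [cpl_fst N νV W0 μ t]; exact hfm.aestronglyMeasurable)
      rw [cpl_fst N νV W0 μ t] at h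
      exact h
    have e2 : ∫ w, f w ∂μ = ∫ p : (ℤ → ℝ) × (ℤ → ℝ), f p.2 ∂(cpl N νV W0 μ t) := by
      have h := integral_map (φ := (Prod.snd : (ℤ → ℝ) × (ℤ → ℝ) → ℤ → ℝ))
        (μ := cpl N νV W0 μ t) measurable_snd.aemeasurable
        (f := fun w => f w) (by rw [cpl_snd N νV W0 μ hinv t]; exact hfm.aestronglyMeasurable)
      rw [cpl_snd N νV W0 μ hinv t] at h
      exact h
    rw [e1, e2, ← integral_sub (hint1 t) (hint2 t)]
  -- convergence
  rw [Metric.tendsto_atTop]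
  intro ε hε
  set Cf := ‖f‖ with hCf
  have hCf0 : 0 ≤ Cf := norm_nonneg f
  set εs := ε / 4 with hεs
  have hεspos : 0 < εs := by positivity
  set η := ε / (8 * (Cf + 1)) with hη
  have hηpos : 0 < η := by positivity
  -- choose R by tightness of μ restricted to the box
  have htight : Tendsto (fun n : ℕ => μ {y : ℤ → ℝ | ∃ i : Box N, (n : ℝ) < |y i.1|})
      atTop (𝓝 0) := by
    have hmeas : ∀ n : ℕ, MeasurableSet {y : ℤ → ℝ | ∃ i : Box N, (n : ℝ) < |y i.1|} := by
      intro n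
      have : {y : ℤ → ℝ | ∃ i : Box N, (n : ℝ) < |y i.1|}
          = ⋃ i : Box N, {y : ℤ → ℝ | (n : ℝ) < |y i.1|} := by
        ext y; simp
      rw [this]
      refine MeasurableSet.iUnion fun i => ?_
      exact measurableSet_lt measurable_const (measurable_pi_apply i.1).abs
    have hanti : Antitone fun n : ℕ => {y : ℤ → ℝ | ∃ i : Box N, (n : ℝ) < |y i.1|} := by
      intro m n hmn y hy
      obtain ⟨i, hi⟩ := hy
      exact ⟨i, lt_of_le_of_lt (by exact_mod_cast hmn) hi⟩
    haveI hBox : Nonempty (Box N) := ⟨⟨1, by rw [Finset.mem_Icc]; omega⟩⟩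
    have hempty : ⋂ n : ℕ, {y : ℤ → ℝ | ∃ i : Box N, (n : ℝ) < |y i.1|} = ∅ := by
      ext y
      simp only [Set.mem_iInter, Set.mem_setOf_eq, Set.mem_empty_iff_false, iff_false, not_forall]
      obtain ⟨n, hn⟩ := exists_nat_gt
        (Finset.univ.sup' Finset.univ_nonempty fun i : Box N => |y i.1|)
      refine ⟨n, ?_⟩
      push_neg
      intro i
      exact le_of_lt (lt_of_le_of_lt
        (Finset.le_sup' (f := fun i : Box N => |y i.1|) (Finset.mem_univ i)) hn)
    have := MeasureTheory.tendsto_measure_iInter_atTop (μ := μ)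
      (fun n => (hmeas n).nullMeasurableSet) hanti ⟨0, measure_ne_top μ _⟩
    rw [hempty, measure_empty] at this
    exact this
  obtain ⟨R, hR⟩ : ∃ R : ℕ, μ {y : ℤ → ℝ | ∃ i : Box N, (R : ℝ) < |y i.1|} < ENNReal.ofReal η := by
    have := (htight.eventually_lt_const (by simp [hηpos] : (0:ℝ≥0∞) < ENNReal.ofReal η))
    exact this.exists
  -- uniform continuity of f ∘ emap on a compact box
  set K : Set (Box N → ℝ) := {x | ∀ i, |x i| ≤ (R : ℝ) + 1} with hK
  have hKcompact : IsCompact K := by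
    have : K = Set.pi Set.univ fun _ : Box N => Set.Icc (-(R : ℝ) - 1) ((R : ℝ) + 1) := by
      ext x
      simp only [hK, Set.mem_setOf_eq, Set.mem_pi, Set.mem_univ, true_implies, Set.mem_Icc]
      constructor
      · intro h i; have := abs_le.mp (h i); constructor <;> linarith [this.1, this.2]
      · intro h i; rw [abs_le]; constructor <;> linarith [(h i).1, (h i).2]
    rw [this]
    exact isCompact_univ_pi fun _ => isCompact_Icc
  have hgcont : Continuous fun x : Box N → ℝ => f (emap N x) :=
    f.continuous.comp (continuous_emap N)
  have huc := (hKcompact.uniformContinuousOn_of_continuous hgcont.continuousOn)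
  rw [Metric.uniformContinuousOn_iff] at huc
  obtain ⟨δ, hδpos, hδ⟩ := huc εs hεspos
  set δ' := min (δ / 2) 1 with hδ'
  have hδ'pos : 0 < δ' := by positivity
  have hδ'le1 : δ' ≤ 1 := min_le_right _ _
  have hδ'ltδ : δ' < δ := lt_of_le_of_lt (min_le_left _ _) (by linarith)
  -- bad events
  set Bd : Set ((ℤ → ℝ) × (ℤ → ℝ)) := {p | ENNReal.ofReal δ' < DD N p} with hBd
  set Br : Set ((ℤ → ℝ) × (ℤ → ℝ)) := {p | ∃ i : Box N, (R : ℝ) < |p.2 i.1|} with hBr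
  have hmeasDD : Measurable (DD N) := by
    apply Finset.measurable_sum
    intro i _
    exact measurable_const.mul ((((measurable_pi_apply i).comp measurable_fst).sub
      ((measurable_pi_apply i).comp measurable_snd)).nnnorm.coe_nnreal_ennreal)
  have hBdmeas : MeasurableSet Bd :=
    measurableSet_lt measurable_const hmeasDD
  have hmeasRset : MeasurableSet {y : ℤ → ℝ | ∃ i : Box N, (R : ℝ) < |y i.1|} := by
    have : {y : ℤ → ℝ | ∃ i : Box N, (R : ℝ) < |y i.1|}
        = ⋃ i : Box N, {y : ℤ → ℝ | (R : ℝ) < |y i.1|} := by ext y; simp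
    rw [this]
    exact MeasurableSet.iUnion fun i =>
      measurableSet_lt measurable_const (measurable_pi_apply i.1).abs
  have hBrmeas : MeasurableSet Br := measurable_snd hmeasRset
  -- pointwise bound
  have hpoint : ∀ p : (ℤ → ℝ) × (ℤ → ℝ), p.1 ∈ SS N → p.2 ∈ SS N →
      |f p.1 - f p.2| ≤ εs + (Bd ∪ Br).indicator (fun _ => 2 * Cf) p := by
    intro p h1 h2
    by_cases hp : p ∈ Bd ∪ Br
    · rw [Set.indicator_of_mem hp]
      have hb1 : |f p.1| ≤ Cf := by
        simpa [Real.norm_eq_abs] using f.norm_coe_le_norm p.1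
      have hb2 : |f p.2| ≤ Cf := by
        simpa [Real.norm_eq_abs] using f.norm_coe_le_norm p.2
      calc |f p.1 - f p.2| ≤ |f p.1| + |f p.2| := abs_sub _ _
        _ ≤ εs + 2 * Cf := by linarith
    · rw [Set.indicator_of_notMem hp, add_zero]
      simp only [Set.mem_union, not_or] at hp
      obtain ⟨hpd, hpr⟩ := hp
      rw [hBd, Set.mem_setOf_eq, not_lt] at hpd
      rw [hBr, Set.mem_setOf_eq, not_exists] at hpr
      -- coordinatewise distance bound
      have hcoord : ∀ i : Box N, |p.1 i.1 - p.2 i.1| ≤ δ' := by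
        intro i
        have hA1 : (1 : ℝ≥0∞) ≤ A N i.1 := by
          have hi := Finset.mem_Icc.mp i.2
          rw [A, ← ENNReal.ofReal_one]
          exact ENNReal.ofReal_le_ofReal (aw_ge_one hi.1 hi.2)
        have hterm : (‖p.1 i.1 - p.2 i.1‖₊ : ℝ≥0∞) ≤ DD N p := by
          calc (‖p.1 i.1 - p.2 i.1‖₊ : ℝ≥0∞) = 1 * (‖p.1 i.1 - p.2 i.1‖₊ : ℝ≥0∞) := (one_mul _).symm
            _ ≤ A N i.1 * (‖p.1 i.1 - p.2 i.1‖₊ : ℝ≥0∞) := mul_le_mul_left hA1 _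
            _ ≤ DD N p := Finset.single_le_sum (f := fun j => A N j * (‖p.1 j - p.2 j‖₊ : ℝ≥0∞))
                (fun j _ => zero_le) i.2
        have := le_trans hterm hpd
        rw [← enorm_eq_nnnorm, Real.enorm_eq_ofReal_abs] at this
        exact (ENNReal.ofReal_le_ofReal_iff hδ'pos.le).mp this
      have hmemK2 : rmap N p.2 ∈ K := fun i => le_trans (not_lt.mp (hpr i)) (by linarith)
      have hmemK1 : rmap N p.1 ∈ K := by
        intro i
        have h1' := hcoord i
        have h2' := not_lt.mp (hpr i)
        have : |p.1 i.1| ≤ |p.2 i.1| + δ' := by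
          calc |p.1 i.1| = |p.2 i.1 + (p.1 i.1 - p.2 i.1)| := by ring_nf
            _ ≤ |p.2 i.1| + |p.1 i.1 - p.2 i.1| := abs_add_le _ _
            _ ≤ |p.2 i.1| + δ' := by linarith
        calc |rmap N p.1 i| ≤ |p.2 i.1| + δ' := this
          _ ≤ (R : ℝ) + 1 := by linarith [hδ'le1]
      have hdist : dist (rmap N p.1) (rmap N p.2) < δ := by
        rw [dist_pi_lt_iff hδpos]
        intro i
        rw [Real.dist_eq]
        exact lt_of_le_of_lt (hcoord i) hδ'ltδ
      have := hδ (rmap N p.1) hmemK1 (rmap N p.2) hmemK2 hdist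
      rw [emap_rmap N h1, emap_rmap N h2, Real.dist_eq] at this
      exact this.le
  -- measure of the bad events
  have hBr_bound : ∀ t, (cpl N νV W0 μ t) Br < ENNReal.ofReal η := by
    intro t
    have hpre : Br = Prod.snd ⁻¹' {y : ℤ → ℝ | ∃ i : Box N, (R : ℝ) < |y i.1|} := rfl
    rw [hpre, ← Measure.map_apply measurable_snd hmeasRset, cpl_snd N νV W0 μ hinv t]
    exact hR
  have hBd_tendsto := cpl_tail (μ := μ) (W0 := W0) (νV := νV) hN
    (δ := ENNReal.ofReal δ') (by simp [hδ'pos, ENNReal.ofReal_pos]) ENNReal.ofReal_ne_top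
  have hBd_ev : ∀ᶠ t in atTop, (cpl N νV W0 μ t) {p | ENNReal.ofReal δ' < DD N p}
      < ENNReal.ofReal η := by
    exact hBd_tendsto.eventually_lt_const (by simp [hηpos, ENNReal.ofReal_pos])
  rw [Filter.eventually_atTop] at hBd_ev
  obtain ⟨T, hT⟩ := hBd_ev
  refine ⟨T, fun t ht => ?_⟩
  -- the final estimate for t ≥ T
  have hBad_meas : MeasurableSet (Bd ∪ Br) := hBdmeas.union hBrmeas
  have hBadle : (cpl N νV W0 μ t) (Bd ∪ Br) ≤ ENNReal.ofReal (η + η) := by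
    calc (cpl N νV W0 μ t) (Bd ∪ Br) ≤ (cpl N νV W0 μ t) Bd + (cpl N νV W0 μ t) Br :=
          measure_union_le _ _
      _ ≤ ENNReal.ofReal η + ENNReal.ofReal η := add_le_add (hT t ht).le (hBr_bound t).le
      _ = ENNReal.ofReal (η + η) := (ENNReal.ofReal_add hηpos.le hηpos.le).symm
  have hBadReal : ((cpl N νV W0 μ t) (Bd ∪ Br)).toReal ≤ η + η :=
    ENNReal.toReal_le_of_le_ofReal (by linarith) hBadle
  -- integral estimate
  have hi1 : Integrable (fun p : (ℤ → ℝ) × (ℤ → ℝ) => |f p.1 - f p.2|) (cpl N νV W0 μ t) :=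
    ((hint1 t).sub (hint2 t)).abs
  have hi2 : Integrable (fun p : (ℤ → ℝ) × (ℤ → ℝ) =>
      εs + (Bd ∪ Br).indicator (fun _ => 2 * Cf) p) (cpl N νV W0 μ t) :=
    (integrable_const εs).add ((integrable_const (2 * Cf)).indicator hBad_meas)
  have hmono : ∫ p, |f p.1 - f p.2| ∂(cpl N νV W0 μ t)
      ≤ ∫ p, (εs + (Bd ∪ Br).indicator (fun _ => 2 * Cf) p) ∂(cpl N νV W0 μ t) := by
    refine integral_mono_ae hi1 hi2 ?_
    filter_upwards [cpl_ae_SS N νV W0 μ hW0SS hμSS t] with p hp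
    exact hpoint p hp.1 hp.2
  have hrhs : ∫ p, (εs + (Bd ∪ Br).indicator (fun _ => 2 * Cf) p) ∂(cpl N νV W0 μ t)
      = εs + ((cpl N νV W0 μ t) (Bd ∪ Br)).toReal * (2 * Cf) := by
    rw [integral_add (integrable_const εs) ((integrable_const (2 * Cf)).indicator hBad_meas),
      integral_const, integral_indicator_const _ hBad_meas]
    simp [measure_univ, smul_eq_mul, Measure.real]
  have habs : |∫ p, (f p.1 - f p.2) ∂(cpl N νV W0 μ t)|
      ≤ ∫ p, |f p.1 - f p.2| ∂(cpl N νV W0 μ t) := by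
    simpa [Real.norm_eq_abs] using
      norm_integral_le_integral_norm (μ := cpl N νV W0 μ t)
        (f := fun p : (ℤ → ℝ) × (ℤ → ℝ) => f p.1 - f p.2)
  rw [Real.dist_eq, hdiff t]
  have hfinal : |∫ p, (f p.1 - f p.2) ∂(cpl N νV W0 μ t)|
      ≤ εs + (η + η) * (2 * Cf) := by
    refine habs.trans (hmono.trans ?_)
    rw [hrhs]
    have := mul_le_mul_of_nonneg_right hBadReal (by linarith : (0:ℝ) ≤ 2 * Cf)
    linarith
  refine lt_of_le_of_lt hfinal ?_
  have he : η * (8 * (Cf + 1)) = ε := by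
    rw [hη]; field_simp
  have hexp : (η + η) * (2 * Cf) = 4 * (η * Cf) := by ring
  have he' : 8 * (η * Cf) + 8 * η = ε := by nlinarith [he]
  rw [hexp, hεs]
  linarith [hηpos]
end
end

section
/- For each ρ > 0 the measure ν_ρ is reversible for one step of the infinite silo model: if η has law ν_ρ, the random variables (U(i) : i ∈ ℤ) are i.i.d. uniform on [0,1] and independent of η, and η₁ is defined by η₁(i) = η(i−1)U(i−1) + η(i+1)(1 − U(i+1)) for all i ∈ ℤ, then for all bounded measurable functions f, g on [0,∞)^ℤ depending on finitely many coordinates, E[f(η) g(η₁)] = E[g(η) f(η₁)]. -/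
open MeasureTheory ProbabilityTheory Filter

noncomputable section

/-- `f` depends on finitely many coordinates (is a cylinder function). -/
def DependsOnFinitelyMany (f : (ℤ → ℝ) → ℝ) : Prop :=
  ∃ I : Finset ℤ, ∀ x y : ℤ → ℝ, (∀ i ∈ I, x i = y i) → f x = f y

open Real Set
open scoped ENNReal

lemma unif01_isProb : IsProbabilityMeasure unif01 := by
  constructor
  rw [unif01, Measure.restrict_apply MeasurableSet.univ, Set.univ_inter, Real.volume_Icc]
  norm_num

lemma gamma_one_apply {l : ℝ} {t : Set ℝ} (ht : MeasurableSet t) :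
    gammaMeasure 1 l t = ∫⁻ y in t ∩ Ici 0, ENNReal.ofReal (l * exp (-(l*y))) := by
  rw [gammaMeasure, withDensity_apply _ ht]
  rw [← lintegral_inter_add_diff (B := Ici 0) _ t measurableSet_Ici]
  have h2 : ∫⁻ y in t \ Ici 0, gammaPDF 1 l y = 0 := by
    rw [setLIntegral_congr_fun_ae (ht.diff measurableSet_Ici)
      (ae_of_all _ (fun x hx => gammaPDF_of_neg (by simpa [Set.mem_diff] using hx.2)))]
    simp
  rw [h2, add_zero]
  refine setLIntegral_congr_fun_ae (ht.inter measurableSet_Ici) (ae_of_all _ (fun x hx => ?_))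
  rw [gammaPDF_of_nonneg hx.2]
  norm_num [Real.Gamma_one, Real.rpow_one]

lemma map_split {l : ℝ} (hl : 0 < l) :
    Measure.map (fun p : ℝ × ℝ => (p.1 * p.2, p.1 * (1 - p.2))) ((gammaMeasure 2 l).prod unif01)
      = (gammaMeasure 1 l).prod (gammaMeasure 1 l) := by
  haveI : IsProbabilityMeasure unif01 := unif01_isProb
  haveI : IsProbabilityMeasure (gammaMeasure 2 l) :=
    isProbabilityMeasure_gammaMeasure (by norm_num) hl
  haveI : IsProbabilityMeasure (gammaMeasure 1 l) :=
    isProbabilityMeasure_gammaMeasure (by norm_num) hl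
  have hφ : Measurable (fun p : ℝ × ℝ => (p.1 * p.2, p.1 * (1 - p.2))) := by fun_prop
  refine Eq.symm (Measure.prod_eq ?_)
  intro s t hs ht
  rw [Measure.map_apply hφ (MeasurableSet.prod hs ht)]
  have hE : MeasurableSet ((fun p : ℝ × ℝ => (p.1 * p.2, p.1 * (1 - p.2))) ⁻¹' (s ×ˢ t)) :=
    hφ (MeasurableSet.prod hs ht)
  rw [Measure.prod_apply hE]
  -- the inner uniform measure as a function of x
  set k : ℝ → ℝ≥0∞ := fun x => unif01 (Prod.mk x ⁻¹' ((fun p : ℝ × ℝ =>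
      (p.1 * p.2, p.1 * (1 - p.2))) ⁻¹' (s ×ˢ t))) with hk
  have hkm : Measurable k := measurable_measure_prodMk_left hE
  rw [gammaMeasure, lintegral_withDensity_eq_lintegral_mul _
    (show Measurable (gammaPDF 2 l) from (measurable_gammaPDFReal 2 l).ennreal_ofReal) hkm]
  set c : ℝ → ℝ≥0∞ := fun x => ENNReal.ofReal (l^2 * exp (-(l*x))) with hc
  have hcm : Measurable c := by fun_prop
  set D : Set (ℝ × ℝ) := {p : ℝ × ℝ | p.2 ∈ s ∧ p.1 - p.2 ∈ t ∧ p.2 ∈ Icc 0 p.1} with hDdef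
  have hD : MeasurableSet D := by
    refine (measurable_snd hs).inter (((measurable_fst.sub measurable_snd) ht).inter ?_)
    exact (measurableSet_le measurable_const measurable_snd).inter
      (measurableSet_le measurable_snd measurable_fst)
  set μc : Measure ℝ := (volume.restrict (Ici 0)).withDensity c with hμc
  have key : ∀ x : ℝ, (gammaPDF 2 l * k) x
      = (Ici (0:ℝ)).indicator (fun x => c x * volume (Prod.mk x ⁻¹' D)) x := by
    intro x
    rcases lt_trichotomy x 0 with hx | rfl | hx
    · rw [indicator_of_notMem (by simpa using hx.not_ge)]
      simp [Pi.mul_apply, gammaPDF_of_neg hx]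
    · rw [indicator_of_mem (mem_Ici.mpr le_rfl)]
      have h1 : gammaPDF 2 l 0 = 0 := by
        rw [gammaPDF_of_nonneg le_rfl]
        norm_num
      have h2 : volume (Prod.mk (0:ℝ) ⁻¹' D) = 0 := by
        have hsub : (Prod.mk (0:ℝ) ⁻¹' D) ⊆ {(0:ℝ)} := by
          intro a ha
          have h := ha.2.2
          simp only [Set.mem_Icc] at h
          simp [le_antisymm h.2 h.1]
        exact measure_mono_null hsub Real.volume_singleton
      simp [Pi.mul_apply, h1, h2]
    · rw [indicator_of_mem (mem_Ici.mpr hx.le)]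
      have hgp : gammaPDF 2 l x = ENNReal.ofReal (l^2 * x * exp (-(l*x))) := by
        rw [gammaPDF_of_nonneg hx.le, Real.Gamma_two]
        rw [show (2:ℝ) - 1 = 1 by norm_num, Real.rpow_one,
          show l ^ (2:ℝ) = l ^ 2 by rw [← Real.rpow_natCast l 2]; norm_num]
        ring_nf
      have hWx : MeasurableSet (Prod.mk x ⁻¹' D) := measurable_prodMk_left hD
      have hsec : Prod.mk x ⁻¹' ((fun p : ℝ × ℝ => (p.1 * p.2, p.1 * (1 - p.2))) ⁻¹' (s ×ˢ t))
          ∩ Icc 0 1 = (fun u => x * u) ⁻¹' (Prod.mk x ⁻¹' D) := by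
        ext u
        simp only [Set.mem_inter_iff, Set.mem_preimage, Set.mem_prod, Set.mem_setOf_eq,
          hDdef, Set.mem_Icc]
        constructor
        · rintro ⟨⟨h1, h2⟩, h3, h4⟩
          refine ⟨h1, by rw [show x - x * u = x * (1 - u) by ring]; exact h2,
            mul_nonneg hx.le h3, ?_⟩
          nlinarith
        · rintro ⟨h1, h2, h3, h4⟩
          have hu0 : 0 ≤ u := by nlinarith
          have hu1 : u ≤ 1 := by nlinarith
          exact ⟨⟨h1, by rw [show x * (1 - u) = x - x * u by ring]; exact h2⟩, hu0, hu1⟩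
      have hkx : k x = ENNReal.ofReal x⁻¹ * volume (Prod.mk x ⁻¹' D) := by
        have hsecm : MeasurableSet (Prod.mk x ⁻¹' ((fun p : ℝ × ℝ =>
            (p.1 * p.2, p.1 * (1 - p.2))) ⁻¹' (s ×ˢ t))) := measurable_prodMk_left hE
        rw [hk]
        show unif01 _ = _
        rw [unif01, Measure.restrict_apply hsecm, hsec,
          ← Measure.map_apply (measurable_const_mul x) hWx,
          Real.map_volume_mul_left hx.ne', Measure.smul_apply, smul_eq_mul,
          abs_of_pos (inv_pos.mpr hx)]
      rw [Pi.mul_apply, hgp, hkx, ← mul_assoc, ← ENNReal.ofReal_mul (by positivity), hc]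
      congr 2
      field_simp
  calc ∫⁻ a, (gammaPDF 2 l * k) a ∂volume
      = ∫⁻ a, (Ici (0:ℝ)).indicator (fun x => c x * volume (Prod.mk x ⁻¹' D)) a ∂volume :=
        lintegral_congr key
    _ = ∫⁻ x in Ici 0, c x * volume (Prod.mk x ⁻¹' D) ∂volume :=
        lintegral_indicator measurableSet_Ici _
    _ = (μc.prod volume) D := by
        rw [Measure.prod_apply hD, hμc, lintegral_withDensity_eq_lintegral_mul _ hcm
          (measurable_measure_prodMk_left hD)]
        rfl
    _ = ∫⁻ a, μc ((fun x => (x, a)) ⁻¹' D) ∂volume := Measure.prod_apply_symm hD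
    _ = (gammaMeasure 1 l) s * (gammaMeasure 1 l) t := by
        have hsecfun : ∀ a : ℝ, μc ((fun x => (x, a)) ⁻¹' D)
            = (s ∩ Ici 0).indicator
              (fun a => ENNReal.ofReal (l * exp (-(l*a))) * (gammaMeasure 1 l) t) a := by
          intro a
          by_cases ha : a ∈ s ∩ Ici 0
          · rw [indicator_of_mem ha]
            have hset : ((fun x => (x, a)) ⁻¹' D) = (fun x => x - a) ⁻¹' (t ∩ Ici 0) := by
              ext x
              simp only [hDdef, Set.mem_preimage, Set.mem_setOf_eq, Set.mem_Icc,
                Set.mem_inter_iff, Set.mem_Ici]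
              constructor
              · rintro ⟨_, h2, _, h4⟩
                exact ⟨h2, by linarith⟩
              · rintro ⟨h1, h2⟩
                exact ⟨ha.1, h1, ha.2, by linarith⟩
            have hsub : (fun x : ℝ => x - a) ⁻¹' (t ∩ Ici 0) ⊆ Ici 0 := by
              intro x hx
              have h1 : (0:ℝ) ≤ x - a := hx.2
              have h2 : (0:ℝ) ≤ a := ha.2
              exact mem_Ici.mpr (by linarith)
            have hmp : MeasurableSet ((fun x : ℝ => x - a) ⁻¹' (t ∩ Ici 0)) :=
              (measurable_sub_const a) (ht.inter measurableSet_Ici)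
            rw [hset, hμc, withDensity_apply _ hmp, Measure.restrict_restrict hmp,
              inter_eq_self_of_subset_left hsub]
            set cc : ℝ → ℝ≥0∞ := fun y => c (y + a) with hcc
            calc ∫⁻ x in (fun x : ℝ => x - a) ⁻¹' (t ∩ Ici 0), c x ∂volume
                = ∫⁻ x in (fun x : ℝ => x - a) ⁻¹' (t ∩ Ici 0), cc (x - a) ∂volume := by
                  refine setLIntegral_congr_fun_ae hmp (ae_of_all _ fun x _ => ?_)
                  rw [hcc]
                  simp [sub_add_cancel]
              _ = ∫⁻ y in t ∩ Ici 0, cc y ∂volume := by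
                  refine MeasurePreserving.setLIntegral_comp_preimage_emb
                    (measurePreserving_sub_right volume a) ?_ _ _
                  exact (MeasurableEquiv.subRight a).measurableEmbedding
              _ = ∫⁻ y in t ∩ Ici 0, ENNReal.ofReal (l * exp (-(l*a)))
                    * ENNReal.ofReal (l * exp (-(l*y))) ∂volume := by
                  refine setLIntegral_congr_fun_ae (ht.inter measurableSet_Ici)
                    (ae_of_all _ fun y _ => ?_)
                  show ENNReal.ofReal (l^2 * exp (-(l*(y+a)))) = _
                  rw [← ENNReal.ofReal_mul (by positivity)]
                  congr 1
                  rw [show -(l*(y+a)) = -(l*a) + -(l*y) by ring, Real.exp_add]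
                  ring
              _ = ENNReal.ofReal (l * exp (-(l*a))) * (gammaMeasure 1 l) t := by
                  rw [lintegral_const_mul _ (by fun_prop), gamma_one_apply ht]
          · rw [indicator_of_notMem ha]
            have hempty : ((fun x => (x, a)) ⁻¹' D) = ∅ := by
              ext x
              simp only [hDdef, Set.mem_preimage, Set.mem_setOf_eq, Set.mem_Icc,
                Set.mem_empty_iff_false, iff_false]
              rintro ⟨h1, _, h3, _⟩
              exact ha ⟨h1, h3⟩
            rw [hempty]
            simp
        rw [lintegral_congr hsecfun, lintegral_indicator (hs.inter measurableSet_Ici),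
          lintegral_mul_const _ (by fun_prop), gamma_one_apply hs]

lemma pi_map_coord {ι : Type*} [Fintype ι] {α β : Type*} [MeasurableSpace α] [MeasurableSpace β]
    (μ : Measure α) [SigmaFinite μ] (ν : Measure β) [SigmaFinite ν] {φ : α → β}
    (hφ : Measurable φ) (hmap : μ.map φ = ν) :
    (Measure.pi fun _ : ι => μ).map (fun x i => φ (x i)) = Measure.pi fun _ : ι => ν := by
  refine (Measure.pi_eq fun s hs => ?_).symm
  have hmeas : Measurable (fun (x : ι → α) i => φ (x i)) :=
    measurable_pi_lambda _ fun i => hφ.comp (measurable_pi_apply i)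
  rw [Measure.map_apply hmeas (MeasurableSet.univ_pi hs)]
  have hpre : (fun (x : ι → α) i => φ (x i)) ⁻¹' (Set.pi univ s)
      = Set.pi univ (fun i => φ ⁻¹' (s i)) := by
    ext x; simp [Set.mem_pi]
  rw [hpre, Measure.pi_pi]
  refine Finset.prod_congr rfl fun i _ => ?_
  rw [← hmap, Measure.map_apply hφ (hs i)]

lemma map_Psi {l : ℝ} (hl : 0 < l) {ι : Type*} [Fintype ι] :
    Measure.map (fun q : (ι → ℝ) × (ι → ℝ) =>
        Sum.elim (fun j => q.1 j * q.2 j) (fun j => q.1 j * (1 - q.2 j)))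
      ((Measure.pi fun _ : ι => gammaMeasure 2 l).prod (Measure.pi fun _ : ι => unif01))
      = Measure.pi fun _ : ι ⊕ ι => gammaMeasure 1 l := by
  haveI : IsProbabilityMeasure unif01 := unif01_isProb
  haveI : IsProbabilityMeasure (gammaMeasure 2 l) := isProbabilityMeasure_gammaMeasure (by norm_num) hl
  haveI : IsProbabilityMeasure (gammaMeasure 1 l) := isProbabilityMeasure_gammaMeasure (by norm_num) hl
  have hφ : Measurable (fun p : ℝ × ℝ => (p.1 * p.2, p.1 * (1 - p.2))) := by fun_prop
  have e1 : MeasurePreserving (MeasurableEquiv.arrowProdEquivProdArrow ℝ ℝ ι).symm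
      ((Measure.pi fun _ : ι => gammaMeasure 2 l).prod (Measure.pi fun _ : ι => unif01))
      (Measure.pi fun _ : ι => (gammaMeasure 2 l).prod unif01) :=
    (measurePreserving_arrowProdEquivProdArrow ℝ ℝ ι (fun _ => gammaMeasure 2 l)
      (fun _ => unif01)).symm _
  have e2 : MeasurePreserving (fun (y : ι → ℝ × ℝ) (j : ι) =>
        (fun p : ℝ × ℝ => (p.1 * p.2, p.1 * (1 - p.2))) (y j))
      (Measure.pi fun _ : ι => (gammaMeasure 2 l).prod unif01)
      (Measure.pi fun _ : ι => (gammaMeasure 1 l).prod (gammaMeasure 1 l)) :=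
    ⟨measurable_pi_lambda _ fun j => hφ.comp (measurable_pi_apply j),
      pi_map_coord _ _ hφ (map_split hl)⟩
  have e3 := measurePreserving_arrowProdEquivProdArrow ℝ ℝ ι (fun _ => gammaMeasure 1 l)
    (fun _ => gammaMeasure 1 l)
  have e4 := measurePreserving_sumPiEquivProdPi_symm (fun _ : ι ⊕ ι => gammaMeasure 1 l)
  have total := (e4.comp (e3.comp (e2.comp e1)))
  have hfun : (⇑(MeasurableEquiv.sumPiEquivProdPi fun _ : ι ⊕ ι => ℝ).symm ∘
      ⇑(MeasurableEquiv.arrowProdEquivProdArrow ℝ ℝ ι) ∘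
      (fun (y : ι → ℝ × ℝ) (j : ι) => (fun p : ℝ × ℝ => (p.1 * p.2, p.1 * (1 - p.2))) (y j)) ∘
      ⇑(MeasurableEquiv.arrowProdEquivProdArrow ℝ ℝ ι).symm)
      = (fun q : (ι → ℝ) × (ι → ℝ) =>
        Sum.elim (fun j => q.1 j * q.2 j) (fun j => q.1 j * (1 - q.2 j))) := by
    funext q
    funext i
    cases i <;> rfl
  rw [← hfun]
  exact total.map_eq

lemma pi_comp_perm {ι : Type*} [Fintype ι] (m : Measure ℝ) [SigmaFinite m] (e : Equiv.Perm ι) :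
    MeasurePreserving (fun x : ι → ℝ => x ∘ e)
      (Measure.pi fun _ : ι => m) (Measure.pi fun _ : ι => m) := by
  have h := measurePreserving_piCongrLeft (fun _ : ι => m) e.symm
  have hco : ⇑(MeasurableEquiv.piCongrLeft (fun _ : ι => ℝ) e.symm) = fun x => x ∘ e := by
    funext x
    funext b
    conv_lhs => rw [show b = e.symm (e b) from (e.symm_apply_apply b).symm]
    exact MeasurableEquiv.piCongrLeft_apply_apply (β := fun _ : ι => ℝ) e.symm x (e b)
  rw [hco] at h
  exact h

/-- For each `ρ > 0` the product Gamma measure `ν_ρ` is reversible for one step of the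
infinite silo model: with `η ~ ν_ρ` and iid uniform fractions `U` independent of `η`,
`E[f(η) g(η₁)] = E[g(η) f(η₁)]` for all bounded measurable cylinder functions `f, g`,
where `η₁(i) = η(i-1)U(i-1) + η(i+1)(1-U(i+1))`. -/
theorem nuRho_reversible_for_ISM (ρ : ℝ) (hρ : 0 < ρ)
    (ν κ : Measure (ℤ → ℝ))
    (hν : IsProductLaw (gammaMeasure 2 (2 / ρ)) ν) (hκ : IsProductLaw unif01 κ)
    (f g : (ℤ → ℝ) → ℝ) (hfm : Measurable f) (hgm : Measurable g)
    (hfb : ∃ C : ℝ, ∀ x, |f x| ≤ C) (hgb : ∃ C : ℝ, ∀ x, |g x| ≤ C)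
    (hfc : DependsOnFinitelyMany f) (hgc : DependsOnFinitelyMany g) :
    (∫ p : (ℤ → ℝ) × (ℤ → ℝ), f p.1 * g (ismStep p.2 p.1) ∂(ν.prod κ)) =
      ∫ p : (ℤ → ℝ) × (ℤ → ℝ), g p.1 * f (ismStep p.2 p.1) ∂(ν.prod κ) := by
  classical
  obtain ⟨hνP, hνI⟩ := hν
  obtain ⟨hκP, hκI⟩ := hκ
  obtain ⟨Jf, hJf⟩ := hfc
  obtain ⟨Jg, hJg⟩ := hgc
  have hl : 0 < 2 / ρ := by positivity
  haveI : IsProbabilityMeasure unif01 := unif01_isProb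
  haveI : IsProbabilityMeasure (gammaMeasure 2 (2/ρ)) :=
    isProbabilityMeasure_gammaMeasure (by norm_num) hl
  haveI : IsProbabilityMeasure (gammaMeasure 1 (2/ρ)) :=
    isProbabilityMeasure_gammaMeasure (by norm_num) hl
  haveI := hνP
  haveI := hκP
  set J : Finset ℤ := Jf ∪ Jg with hJdef
  set I : Finset ℤ := J ∪ J.image (· + 1) ∪ J.image (· - 1) with hIdef
  have hJI : ∀ i ∈ J, i ∈ I ∧ i + 1 ∈ I ∧ i - 1 ∈ I := by
    intro i hi
    exact ⟨Finset.mem_union_left _ (Finset.mem_union_left _ hi),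
      Finset.mem_union_left _ (Finset.mem_union_right _ (Finset.mem_image_of_mem _ hi)),
      Finset.mem_union_right _ (Finset.mem_image_of_mem _ hi)⟩
  have hJfJ : ∀ i ∈ Jf, i ∈ J := fun i hi => Finset.mem_union_left _ hi
  have hJgJ : ∀ i ∈ Jg, i ∈ J := fun i hi => Finset.mem_union_right _ hi
  -- finite-window objects
  set ext0 : (↥I → ℝ) → (ℤ → ℝ) := fun z i => if h : i ∈ I then z ⟨i, h⟩ else 0 with hext0
  have hext0m : Measurable ext0 := by
    refine measurable_pi_lambda _ fun i => ?_
    by_cases h : i ∈ I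
    · simp only [hext0, dif_pos h]
      exact measurable_pi_apply _
    · simp only [hext0, dif_neg h]
      exact measurable_const
  set step : (↥I → ℝ) × (↥I → ℝ) → (ℤ → ℝ) := fun q i =>
    ext0 q.1 (i-1) * ext0 q.2 (i-1) + ext0 q.1 (i+1) * (1 - ext0 q.2 (i+1)) with hstepdef
  have hev1 : ∀ i : ℤ, Measurable fun q : (↥I → ℝ) × (↥I → ℝ) => ext0 q.1 i := by
    intro i
    exact (measurable_pi_apply i).comp (hext0m.comp measurable_fst)
  have hev2 : ∀ i : ℤ, Measurable fun q : (↥I → ℝ) × (↥I → ℝ) => ext0 q.2 i := by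
    intro i
    exact (measurable_pi_apply i).comp (hext0m.comp measurable_snd)
  have hstepm : Measurable step := by
    rw [hstepdef]
    exact measurable_pi_lambda _ fun i => ((hev1 _).mul (hev2 _)).add
      ((hev1 _).mul (measurable_const.sub (hev2 _)))
  set H : (↥I → ℝ) × (↥I → ℝ) → ℝ := fun q => f (ext0 q.1) * g (step q) with hHdef
  set H' : (↥I → ℝ) × (↥I → ℝ) → ℝ := fun q => g (ext0 q.1) * f (step q) with hH'def
  have hHm : Measurable H := (hfm.comp (hext0m.comp measurable_fst)).mul (hgm.comp hstepm)
  have hH'm : Measurable H' := (hgm.comp (hext0m.comp measurable_fst)).mul (hfm.comp hstepm)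
  set A : (↥I ⊕ ↥I → ℝ) → (ℤ → ℝ) := fun e i =>
    if h : i ∈ I then e (Sum.inl ⟨i, h⟩) + e (Sum.inr ⟨i, h⟩) else 0 with hAdef
  set B : (↥I ⊕ ↥I → ℝ) → (ℤ → ℝ) := fun e i =>
    (if h : i - 1 ∈ I then e (Sum.inl ⟨i-1, h⟩) else 0)
      + (if h : i + 1 ∈ I then e (Sum.inr ⟨i+1, h⟩) else 0) with hBdef
  have hAm : Measurable A := by
    refine measurable_pi_lambda _ fun i => ?_
    by_cases h : i ∈ I
    · simp only [hAdef, dif_pos h]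
      exact (measurable_pi_apply _).add (measurable_pi_apply _)
    · simp only [hAdef, dif_neg h]
      exact measurable_const
  have hBm : Measurable B := by
    refine measurable_pi_lambda _ fun i => ?_
    refine Measurable.add ?_ ?_
    · by_cases h : i - 1 ∈ I
      · simp only [hBdef, dif_pos h]
        exact measurable_pi_apply _
      · simp only [hBdef, dif_neg h]
        exact measurable_const
    · by_cases h : i + 1 ∈ I
      · simp only [hBdef, dif_pos h]
        exact measurable_pi_apply _
      · simp only [hBdef, dif_neg h]
        exact measurable_const
  set F : (↥I ⊕ ↥I → ℝ) → ℝ := fun e => f (A e) * g (B e) with hFdef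
  set G : (↥I ⊕ ↥I → ℝ) → ℝ := fun e => g (A e) * f (B e) with hGdef
  have hFm : Measurable F := (hfm.comp hAm).mul (hgm.comp hBm)
  have hGm : Measurable G := (hgm.comp hAm).mul (hfm.comp hBm)
  set Ψ : (↥I → ℝ) × (↥I → ℝ) → (↥I ⊕ ↥I → ℝ) := fun q =>
    Sum.elim (fun j => q.1 j * q.2 j) (fun j => q.1 j * (1 - q.2 j)) with hΨdef
  have hΨm : Measurable Ψ := by
    rw [hΨdef]
    refine measurable_pi_lambda _ fun k => ?_
    cases k with
    | inl j =>
      simp only [Sum.elim_inl]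
      exact Measurable.mul ((measurable_pi_apply j).comp measurable_fst)
        ((measurable_pi_apply j).comp measurable_snd)
    | inr j =>
      simp only [Sum.elim_inr]
      exact Measurable.mul ((measurable_pi_apply j).comp measurable_fst)
        (Measurable.sub measurable_const ((measurable_pi_apply j).comp measurable_snd))
  -- pointwise identities
  have claim1 : ∀ p : (ℤ → ℝ) × (ℤ → ℝ),
      f p.1 * g (ismStep p.2 p.1) = H (Prod.map (fun w (i : I) => w (i : ℤ))
        (fun w (i : I) => w (i : ℤ)) p) := by
    intro p
    have e1 : f p.1 = f (ext0 fun i : I => p.1 (i : ℤ)) := by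
      refine hJf _ _ fun i hi => ?_
      have hii := (hJI i (hJfJ i hi)).1
      simp only [hext0, dif_pos hii]
    have e2 : g (ismStep p.2 p.1) = g (step (Prod.map (fun w (i : I) => w (i : ℤ))
        (fun w (i : I) => w (i : ℤ)) p)) := by
      refine hJg _ _ fun i hi => ?_
      obtain ⟨hiI, hip, him⟩ := hJI i (hJgJ i hi)
      simp only [hstepdef, hext0, ismStep, Prod.map, dif_pos hip, dif_pos him]
    rw [hHdef]
    simp only [Prod.map]
    rw [← e1]
    rw [hstepdef] at e2
    simp only [Prod.map] at e2
    rw [← e2]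
  have claim1' : ∀ p : (ℤ → ℝ) × (ℤ → ℝ),
      g p.1 * f (ismStep p.2 p.1) = H' (Prod.map (fun w (i : I) => w (i : ℤ))
        (fun w (i : I) => w (i : ℤ)) p) := by
    intro p
    have e1 : g p.1 = g (ext0 fun i : I => p.1 (i : ℤ)) := by
      refine hJg _ _ fun i hi => ?_
      have hii := (hJI i (hJgJ i hi)).1
      simp only [hext0, dif_pos hii]
    have e2 : f (ismStep p.2 p.1) = f (step (Prod.map (fun w (i : I) => w (i : ℤ))
        (fun w (i : I) => w (i : ℤ)) p)) := by
      refine hJf _ _ fun i hi => ?_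
      obtain ⟨hiI, hip, him⟩ := hJI i (hJfJ i hi)
      simp only [hstepdef, hext0, ismStep, Prod.map, dif_pos hip, dif_pos him]
    rw [hH'def]
    simp only [Prod.map]
    rw [← e1]
    rw [hstepdef] at e2
    simp only [Prod.map] at e2
    rw [← e2]
  have hAΨ : ∀ q, A (Ψ q) = ext0 q.1 := by
    intro q
    funext i
    by_cases h : i ∈ I
    · simp only [hAdef, hΨdef, hext0, dif_pos h, Sum.elim_inl, Sum.elim_inr]
      ring
    · simp only [hAdef, hext0, dif_neg h]
  have hBΨ : ∀ q, B (Ψ q) = step q := by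
    intro q
    funext i
    by_cases h1 : i - 1 ∈ I <;> by_cases h2 : i + 1 ∈ I <;>
      simp only [hBdef, hΨdef, hstepdef, hext0, dif_pos, dif_neg, h1, h2, Sum.elim_inl,
        Sum.elim_inr, dite_true, dite_false] <;> ring
  have claim2 : ∀ q, H q = F (Ψ q) := by
    intro q
    simp only [hHdef, hFdef, hAΨ, hBΨ]
  have claim2' : ∀ q, H' q = G (Ψ q) := by
    intro q
    simp only [hH'def, hGdef, hAΨ, hBΨ]
  -- the pairing involution
  set sw : ↥I ⊕ ↥I → ↥I ⊕ ↥I := Sum.elim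
    (fun j => if h : ((j : ℤ) + 1) ∈ I then Sum.inr ⟨(j : ℤ) + 1, h⟩ else Sum.inl j)
    (fun j => if h : ((j : ℤ) - 1) ∈ I then Sum.inl ⟨(j : ℤ) - 1, h⟩ else Sum.inr j) with hswdef
  have hswinv : ∀ k, sw (sw k) = k := by
    intro k
    cases k with
    | inl j =>
      by_cases h : ((j : ℤ) + 1) ∈ I
      · simp only [hswdef, Sum.elim_inl, dif_pos h, Sum.elim_inr]
        have h2 : ((j : ℤ) + 1 - 1) ∈ I := by
          rw [add_sub_cancel_right]
          exact j.2
        rw [dif_pos h2]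
        congr 1
        exact Subtype.ext (by ring)
      · simp only [hswdef, Sum.elim_inl, dif_neg h]
    | inr j =>
      by_cases h : ((j : ℤ) - 1) ∈ I
      · simp only [hswdef, Sum.elim_inr, dif_pos h, Sum.elim_inl]
        have h2 : ((j : ℤ) - 1 + 1) ∈ I := by
          rw [sub_add_cancel]
          exact j.2
        rw [dif_pos h2]
        congr 1
        exact Subtype.ext (by ring)
      · simp only [hswdef, Sum.elim_inr, dif_neg h]
  set swE : ↥I ⊕ ↥I ≃ ↥I ⊕ ↥I := ⟨sw, sw, hswinv, hswinv⟩ with hswE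
  have claim3 : ∀ e : ↥I ⊕ ↥I → ℝ, F (e ∘ sw) = G e := by
    intro e
    have e1 : f (A (e ∘ sw)) = f (B e) := by
      refine hJf _ _ fun i hi => ?_
      obtain ⟨hiI, hip, him⟩ := hJI i (hJfJ i hi)
      simp only [hAdef, hBdef, Function.comp_apply, dif_pos hiI, dif_pos hip, dif_pos him,
        hswdef, Sum.elim_inl, Sum.elim_inr]
      ring
    have e2 : g (B (e ∘ sw)) = g (A e) := by
      refine hJg _ _ fun i hi => ?_
      obtain ⟨hiI, hip, him⟩ := hJI i (hJgJ i hi)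
      have k1 : sw (Sum.inl ⟨i - 1, him⟩) = Sum.inr ⟨i, hiI⟩ := by
        simp only [hswdef, Sum.elim_inl]
        have hcond : (i - 1 + 1) ∈ I := by
          rw [sub_add_cancel]
          exact hiI
        rw [dif_pos hcond]
        congr 1
        exact Subtype.ext (by ring)
      have k2 : sw (Sum.inr ⟨i + 1, hip⟩) = Sum.inl ⟨i, hiI⟩ := by
        simp only [hswdef, Sum.elim_inr]
        have hcond : (i + 1 - 1) ∈ I := by
          rw [add_sub_cancel_right]
          exact hiI
        rw [dif_pos hcond]
        congr 1
        exact Subtype.ext (by ring)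
      simp only [hAdef, hBdef, Function.comp_apply, dif_pos hiI, dif_pos hip, dif_pos him,
        k1, k2]
      ring
    simp only [hFdef, hGdef]
    rw [e1, e2]
    ring
  -- measure identifications
  have hpI : Measurable (fun w : ℤ → ℝ => fun i : I => w (i : ℤ)) :=
    measurable_pi_lambda _ fun j => measurable_pi_apply _
  have hμIfin : (ν.prod κ).map (Prod.map (fun w (i : I) => w (i : ℤ))
        (fun w (i : I) => w (i : ℤ)))
      = (Measure.pi fun _ : ↥I => gammaMeasure 2 (2/ρ)).prod
        (Measure.pi fun _ : ↥I => unif01) := by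
    rw [← Measure.map_prod_map ν κ hpI hpI, hνI I, hκI I]
  have hmpπ := measurePreserving_piCongrLeft (fun _ : ↥I ⊕ ↥I => gammaMeasure 1 (2/ρ)) swE
  have hTco : ⇑(MeasurableEquiv.piCongrLeft (fun _ : ↥I ⊕ ↥I => ℝ) swE) = fun e => e ∘ sw := by
    funext e
    funext b
    conv_lhs => rw [show b = swE (swE.symm b) from (swE.apply_symm_apply b).symm]
    exact MeasurableEquiv.piCongrLeft_apply_apply (β := fun _ : ↥I ⊕ ↥I => ℝ) swE e (swE.symm b)
  -- the integral computation
  have chain : ∀ (H'' : (↥I → ℝ) × (↥I → ℝ) → ℝ) (F' : (↥I ⊕ ↥I → ℝ) → ℝ),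
      Measurable H'' → Measurable F' → (∀ q, H'' q = F' (Ψ q)) →
      (∫ p, H'' (Prod.map (fun w (i : I) => w (i : ℤ)) (fun w (i : I) => w (i : ℤ)) p)
          ∂(ν.prod κ))
        = ∫ e, F' e ∂(Measure.pi fun _ : ↥I ⊕ ↥I => gammaMeasure 1 (2/ρ)) := by
    intro H'' F' hH''m hF'm hHF'
    calc ∫ p, H'' (Prod.map (fun w (i : I) => w (i : ℤ)) (fun w (i : I) => w (i : ℤ)) p)
          ∂(ν.prod κ)
        = ∫ q, H'' q ∂((ν.prod κ).map (Prod.map (fun w (i : I) => w (i : ℤ))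
            (fun w (i : I) => w (i : ℤ)))) :=
          (integral_map (hpI.prodMap hpI).aemeasurable hH''m.aestronglyMeasurable).symm
      _ = ∫ q, H'' q ∂((Measure.pi fun _ : ↥I => gammaMeasure 2 (2/ρ)).prod
            (Measure.pi fun _ : ↥I => unif01)) := by rw [hμIfin]
      _ = ∫ q, F' (Ψ q) ∂((Measure.pi fun _ : ↥I => gammaMeasure 2 (2/ρ)).prod
            (Measure.pi fun _ : ↥I => unif01)) := by
          exact integral_congr_ae (ae_of_all _ fun q => hHF' q)
      _ = ∫ e, F' e ∂(Measure.map Ψ ((Measure.pi fun _ : ↥I => gammaMeasure 2 (2/ρ)).prod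
            (Measure.pi fun _ : ↥I => unif01))) :=
          (integral_map hΨm.aemeasurable hF'm.aestronglyMeasurable).symm
      _ = ∫ e, F' e ∂(Measure.pi fun _ : ↥I ⊕ ↥I => gammaMeasure 1 (2/ρ)) := by
          rw [map_Psi hl]
  have hLHS : (∫ p : (ℤ → ℝ) × (ℤ → ℝ), f p.1 * g (ismStep p.2 p.1) ∂(ν.prod κ))
      = ∫ e, F e ∂(Measure.pi fun _ : ↥I ⊕ ↥I => gammaMeasure 1 (2/ρ)) := by
    rw [show (fun p : (ℤ → ℝ) × (ℤ → ℝ) => f p.1 * g (ismStep p.2 p.1))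
      = fun p => H (Prod.map (fun w (i : I) => w (i : ℤ)) (fun w (i : I) => w (i : ℤ)) p)
      from funext claim1]
    exact chain H F hHm hFm claim2
  have hRHS : (∫ p : (ℤ → ℝ) × (ℤ → ℝ), g p.1 * f (ismStep p.2 p.1) ∂(ν.prod κ))
      = ∫ e, G e ∂(Measure.pi fun _ : ↥I ⊕ ↥I => gammaMeasure 1 (2/ρ)) := by
    rw [show (fun p : (ℤ → ℝ) × (ℤ → ℝ) => g p.1 * f (ismStep p.2 p.1))
      = fun p => H' (Prod.map (fun w (i : I) => w (i : ℤ)) (fun w (i : I) => w (i : ℤ)) p)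
      from funext claim1']
    exact chain H' G hH'm hGm claim2'
  rw [hLHS, hRHS]
  have := hmpπ.integral_comp
    (MeasurableEquiv.piCongrLeft (fun _ : ↥I ⊕ ↥I => ℝ) swE).measurableEmbedding F
  rw [hTco] at this
  calc ∫ e, F e ∂(Measure.pi fun _ : ↥I ⊕ ↥I => gammaMeasure 1 (2/ρ))
      = ∫ e, F (e ∘ sw) ∂(Measure.pi fun _ : ↥I ⊕ ↥I => gammaMeasure 1 (2/ρ)) := this.symm
    _ = ∫ e, G e ∂(Measure.pi fun _ : ↥I ⊕ ↥I => gammaMeasure 1 (2/ρ)) :=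
        integral_congr_ae (ae_of_all _ fun e => claim3 e)
end
end

section
/- Let X_t and Y_t be two silo processes on [0,∞)^{Λ^N} driven by the same families (U_t(i)) and (V_t(i)), with (deterministic) initial conditions satisfying X_0(i) ≥ Y_0(i) for all i ∈ Λ^N. Then for every i ∈ Λ^N, X_t(i) − Y_t(i) → 0 almost surely as t → ∞. -/
open MeasureTheory ProbabilityTheory Filter

noncomputable section

/-- `F` is a doubly-indexed family of iid real random variables with common law `m`. -/
def IsIIDFam {Ω : Type*} [MeasurableSpace Ω] (P : Measure Ω) (m : Measure ℝ)
    (F : ℕ → ℤ → Ω → ℝ) : Prop :=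
  (∀ t i, Measurable (F t i)) ∧
    iIndepFun (fun (p : ℕ × ℤ) ω => F p.1 p.2 ω) P ∧
    ∀ t i, P.map (F t i) = m

namespace CoupledSilo

open Real Finset

/-- spatial weight -/
def phiF (N : ℕ) (i : ℤ) : ℝ := Real.sin (Real.pi * i / (N + 1))

lemma phiF_nonneg (N : ℕ) {i : ℤ} (h0 : 0 ≤ i) (h1 : i ≤ (N:ℤ) + 1) : 0 ≤ phiF N i := by
  have hi0 : (0:ℝ) ≤ (i:ℝ) := by exact_mod_cast h0
  have hi1 : (i:ℝ) ≤ (N:ℝ) + 1 := by exact_mod_cast h1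
  have hNpos : (0:ℝ) < (N:ℝ) + 1 := by positivity
  apply Real.sin_nonneg_of_nonneg_of_le_pi
  · positivity
  · rw [div_le_iff₀ hNpos]
    calc Real.pi * i ≤ Real.pi * ((N:ℝ)+1) := by
          exact mul_le_mul_of_nonneg_left hi1 Real.pi_pos.le
      _ = Real.pi * ((N:ℝ)+1) := rfl

lemma phiF_pos (N : ℕ) {i : ℤ} (h0 : 1 ≤ i) (h1 : i ≤ (N:ℤ)) : 0 < phiF N i := by
  have hi0 : (1:ℝ) ≤ (i:ℝ) := by exact_mod_cast h0
  have hi1 : (i:ℝ) ≤ (N:ℝ) := by exact_mod_cast h1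
  have hNpos : (0:ℝ) < (N:ℝ) + 1 := by positivity
  apply Real.sin_pos_of_pos_of_lt_pi
  · have : (0:ℝ) < (i:ℝ) := by linarith
    positivity
  · rw [div_lt_iff₀ hNpos]
    have : (i:ℝ) < (N:ℝ) + 1 := by linarith
    calc Real.pi * i < Real.pi * ((N:ℝ)+1) := by
          exact mul_lt_mul_of_pos_left this Real.pi_pos
      _ = Real.pi * ((N:ℝ)+1) := rfl

lemma phiF_zero (N : ℕ) : phiF N 0 = 0 := by simp [phiF]

lemma phiF_top (N : ℕ) : phiF N ((N:ℤ) + 1) = 0 := by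
  have hN : ((N:ℝ)+1) ≠ 0 := by positivity
  have : Real.pi * (((N:ℤ) + 1 : ℤ) : ℝ) / ((N:ℝ) + 1) = Real.pi := by
    push_cast; field_simp
  rw [phiF]
  push_cast
  push_cast at this
  rw [this, Real.sin_pi]

lemma phiF_rec (N : ℕ) (j : ℤ) :
    phiF N (j-1) + phiF N (j+1) = 2 * Real.cos (Real.pi / (N+1)) * phiF N j := by
  have hN : ((N:ℝ)+1) ≠ 0 := by positivity
  have h1 : Real.pi * ((j:ℝ) - 1) / ((N:ℝ)+1)
      = Real.pi * j / ((N:ℝ)+1) - Real.pi / ((N:ℝ)+1) := by field_simp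
  have h2 : Real.pi * ((j:ℝ) + 1) / ((N:ℝ)+1)
      = Real.pi * j / ((N:ℝ)+1) + Real.pi / ((N:ℝ)+1) := by field_simp
  simp only [phiF]
  push_cast
  rw [h1, h2, Real.sin_sub, Real.sin_add]
  ring


variable {Ω : Type*} [MeasurableSpace Ω]

def eAux (N : ℕ) (U : ℕ → ℤ → Ω → ℝ) (d0 : ℤ → ℝ) : ℕ → Ω → ℤ → ℝ
  | 0 => fun _ => trunc N d0
  | t+1 => fun ω i => if 1 ≤ i ∧ i ≤ (N:ℤ) then
      eAux N U d0 t ω (i+1) * U t (i+1) ω + eAux N U d0 t ω (i-1) * (1 - U t (i-1) ω)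
    else 0

variable {N : ℕ} {U : ℕ → ℤ → Ω → ℝ} {d0 : ℤ → ℝ}

lemma eAux_zero_out (t : ℕ) (ω : Ω) (k : ℤ) (h : ¬(1 ≤ k ∧ k ≤ (N:ℤ))) :
    eAux N U d0 t ω k = 0 := by
  cases t <;> simp [eAux, trunc, h]

lemma eAux_nonneg (hd0 : ∀ i : ℤ, 1 ≤ i → i ≤ (N:ℤ) → 0 ≤ d0 i) {ω : Ω}
    (hω : ∀ (s : ℕ) (k : ℤ), U s k ω ∈ Set.Icc (0:ℝ) 1) :
    ∀ (t : ℕ) (k : ℤ), 0 ≤ eAux N U d0 t ω k := by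
  intro t
  induction t with
  | zero =>
    intro k
    simp only [eAux, trunc]
    split_ifs with h
    · exact hd0 k h.1 h.2
    · exact le_refl 0
  | succ t ih =>
    intro k
    simp only [eAux]
    split_ifs with h
    · have h1 := hω t (k+1)
      have h2 := hω t (k-1)
      exact add_nonneg (mul_nonneg (ih _) h1.1)
        (mul_nonneg (ih _) (by simp only [Set.mem_Icc] at h2; linarith [h2.2]))
    · exact le_refl 0

lemma eAux_meas (hUm : ∀ (t : ℕ) (i : ℤ), Measurable (U t i)) :
    ∀ (t : ℕ) (k : ℤ), Measurable fun ω => eAux N U d0 t ω k := by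
  intro t
  induction t with
  | zero => intro k; exact measurable_const
  | succ t ih =>
    intro k
    by_cases h : 1 ≤ k ∧ k ≤ (N:ℤ)
    · simp only [eAux, if_pos h]
      exact ((ih _).mul (hUm t _)).add ((ih _).mul (measurable_const.sub (hUm t _)))
    · simp only [eAux, if_neg h]
      exact measurable_const

lemma eAux_factor (t : ℕ) :
    ∃ H : ((Finset.range t ×ˢ Finset.Icc (0:ℤ) ((N:ℤ)+1) : Finset (ℕ × ℤ)) → ℝ) → ℤ → ℝ,
      (∀ k, Measurable fun v => H v k) ∧
      ∀ (ω : Ω) (k : ℤ), eAux N U d0 t ω k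
        = H (fun p => U (p : ℕ × ℤ).1 (p : ℕ × ℤ).2 ω) k := by
  induction t with
  | zero => exact ⟨fun _ => trunc N d0, fun _ => measurable_const, fun _ _ => rfl⟩
  | succ t ih =>
    obtain ⟨H, Hm, Hid⟩ := ih
    have hsub : (Finset.range t ×ˢ Finset.Icc (0:ℤ) ((N:ℤ)+1))
        ⊆ (Finset.range (t+1) ×ˢ Finset.Icc (0:ℤ) ((N:ℤ)+1)) := by
      apply Finset.product_subset_product_left
      exact Finset.range_subset_range.2 (Nat.le_succ t)
    refine ⟨fun v k => if h : 1 ≤ k ∧ k ≤ (N:ℤ) then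
        H (fun p => v ⟨p, hsub p.2⟩) (k+1) *
          (if hm : (t, k+1) ∈ Finset.range (t+1) ×ˢ Finset.Icc (0:ℤ) ((N:ℤ)+1)
            then v ⟨(t, k+1), hm⟩ else 0)
        + H (fun p => v ⟨p, hsub p.2⟩) (k-1) *
          (1 - if hm : (t, k-1) ∈ Finset.range (t+1) ×ˢ Finset.Icc (0:ℤ) ((N:ℤ)+1)
            then v ⟨(t, k-1), hm⟩ else 0)
      else 0, ?_, ?_⟩
    · intro k
      by_cases h : 1 ≤ k ∧ k ≤ (N:ℤ)
      · simp only [dif_pos h]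
        have hR : Measurable fun (v : ((Finset.range (t+1) ×ˢ Finset.Icc (0:ℤ) ((N:ℤ)+1) :
            Finset (ℕ × ℤ))) → ℝ) => (fun p => v ⟨p, hsub p.2⟩ :
            ((Finset.range t ×ˢ Finset.Icc (0:ℤ) ((N:ℤ)+1) : Finset (ℕ × ℤ))) → ℝ) :=
          measurable_pi_lambda _ (fun p => measurable_pi_apply _)
        apply Measurable.add
        · apply Measurable.mul ((Hm (k+1)).comp hR)
          split_ifs with hm
          · exact measurable_pi_apply _
          · exact measurable_const
        · apply Measurable.mul ((Hm (k-1)).comp hR)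
          apply Measurable.sub measurable_const
          split_ifs with hm
          · exact measurable_pi_apply _
          · exact measurable_const
      · simp only [dif_neg h]
        exact measurable_const
    · intro ω k
      by_cases h : 1 ≤ k ∧ k ≤ (N:ℤ)
      · have m1 : (t, k+1) ∈ Finset.range (t+1) ×ˢ Finset.Icc (0:ℤ) ((N:ℤ)+1) := by
          simp only [Finset.mem_product, Finset.mem_range, Finset.mem_Icc]
          omega
        have m2 : (t, k-1) ∈ Finset.range (t+1) ×ˢ Finset.Icc (0:ℤ) ((N:ℤ)+1) := by
          simp only [Finset.mem_product, Finset.mem_range, Finset.mem_Icc]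
          omega
        simp only [eAux, if_pos h, dif_pos h, dif_pos m1, dif_pos m2]
        rw [← Hid ω (k+1), ← Hid ω (k-1)]
      · simp only [eAux, if_pos h, dif_neg h, if_neg h]

lemma eAux_indepFun (P : Measure Ω) (hUm : ∀ (t : ℕ) (i : ℤ), Measurable (U t i))
    (hInd : iIndepFun (fun (p : ℕ × ℤ) ω => U p.1 p.2 ω) P)
    (t : ℕ) (j : ℤ) :
    IndepFun (fun ω => eAux N U d0 t ω j) (fun ω => U t j ω) P := by
  obtain ⟨H, Hm, Hid⟩ := eAux_factor (N := N) (U := U) (d0 := d0) t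
  have hdisj : Disjoint (Finset.range t ×ˢ Finset.Icc (0:ℤ) ((N:ℤ)+1))
      ({(t, j)} : Finset (ℕ × ℤ)) := by
    simp only [Finset.disjoint_singleton_right, Finset.mem_product, Finset.mem_range]
    intro hc
    exact absurd hc.1 (lt_irrefl t)
  have base := hInd.indepFun_finset _ _ hdisj (fun p => hUm p.1 p.2)
  have comp := base.comp (φ := fun v => H v j)
    (ψ := fun w : (({(t, j)} : Finset (ℕ × ℤ)) → ℝ) => w ⟨(t, j), Finset.mem_singleton_self _⟩)
    (Hm j) (measurable_pi_apply _ :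
      Measurable fun w : (({(t, j)} : Finset (ℕ × ℤ)) → ℝ) => w ⟨(t, j), Finset.mem_singleton_self _⟩)
  have e : (fun ω => eAux N U d0 t ω j)
      = fun ω => H (fun p => U (p : ℕ × ℤ).1 (p : ℕ × ℤ).2 ω) j := funext fun ω => Hid ω j
  rw [e]
  exact comp

lemma unif01_compl : unif01 ((Set.Icc (0:ℝ) 1)ᶜ) = 0 := by
  rw [unif01, Measure.restrict_apply measurableSet_Icc.compl]
  simp

instance : IsProbabilityMeasure unif01 :=
  ⟨by rw [unif01, Measure.restrict_apply_univ]; simp [Real.volume_Icc]⟩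

lemma unif01_lint (a b : ℝ) (ha : 0 ≤ a) (hb : 0 ≤ b) :
    ∫⁻ x, ENNReal.ofReal (a * x + b * (1 - x)) ∂unif01 = ENNReal.ofReal ((a + b) / 2) := by
  have hcont : Continuous fun x : ℝ => a * x + b * (1 - x) := by continuity
  have hint : Integrable (fun x => a * x + b * (1 - x)) unif01 := hcont.integrableOn_Icc
  have hnn : 0 ≤ᵐ[unif01] fun x => a * x + b * (1 - x) := by
    rw [unif01]
    filter_upwards [ae_restrict_mem measurableSet_Icc] with x hx
    exact add_nonneg (mul_nonneg ha hx.1) (mul_nonneg hb (by linarith [hx.2]))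
  rw [← ofReal_integral_eq_lintegral_ofReal hint hnn]
  congr 1
  have key : ∫ x in Set.Icc (0:ℝ) 1, (a * x + b * (1 - x)) = (a + b) / 2 := by
    rw [MeasureTheory.integral_Icc_eq_integral_Ioc,
      ← intervalIntegral.integral_of_le (zero_le_one (α := ℝ))]
    have hrw : (fun x : ℝ => a * x + b * (1 - x)) = fun x : ℝ => (a - b) * x + b := by
      funext x; ring
    rw [hrw]
    have h1 : IntervalIntegrable (fun x : ℝ => (a - b) * x) volume 0 1 :=
      (by continuity : Continuous fun x : ℝ => (a - b) * x).intervalIntegrable 0 1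
    rw [intervalIntegral.integral_add h1 intervalIntegrable_const,
      intervalIntegral.integral_const_mul, integral_id, intervalIntegral.integral_const]
    norm_num
    ring
  exact key

end CoupledSilo

/-- Two silo processes coupled through the same uniform fractions `U` and weights `V`,
started from ordered deterministic initial conditions, approach each other: for every
site `i ∈ Λ^N`, `X_t(i) - Y_t(i) → 0` almost surely as `t → ∞`. -/
theorem coupled_silo_processes_merge (N : ℕ) (hN : 1 ≤ N)
    (νV : Measure ℝ) (hνV : IsVLaw νV)
    {Ω : Type*} [MeasurableSpace Ω] (P : Measure Ω) [IsProbabilityMeasure P]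
    (U V : ℕ → ℤ → Ω → ℝ)
    (hU : IsIIDFam P unif01 U) (hV : IsIIDFam P νV V)
    (hUV : IndepFun (fun ω (p : ℕ × ℤ) => U p.1 p.2 ω)
      (fun ω (p : ℕ × ℤ) => V p.1 p.2 ω) P)
    (X Y : ℕ → Ω → ℤ → ℝ) (x0 y0 : ℤ → ℝ)
    (hy0 : ∀ i : ℤ, 1 ≤ i → i ≤ (N : ℤ) → 0 ≤ y0 i)
    (h0 : ∀ i : ℤ, 1 ≤ i → i ≤ (N : ℤ) → y0 i ≤ x0 i)
    (hX0 : ∀ ω, X 0 ω = x0) (hY0 : ∀ ω, Y 0 ω = y0)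
    (hXrec : ∀ (t : ℕ) (ω : Ω),
      X (t + 1) ω = siloStep N (fun i => U t i ω) (fun i => V (t + 1) i ω) (X t ω))
    (hYrec : ∀ (t : ℕ) (ω : Ω),
      Y (t + 1) ω = siloStep N (fun i => U t i ω) (fun i => V (t + 1) i ω) (Y t ω)) :
    ∀ i : ℤ, 1 ≤ i → i ≤ (N : ℤ) →
      ∀ᵐ ω ∂P, Filter.Tendsto (fun t => X t ω i - Y t ω i) Filter.atTop (nhds 0) := by
  classical
  intro i hi1 hi2
  obtain ⟨hUm, hUind, hUlaw⟩ := hU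
  set d0 : ℤ → ℝ := fun j => x0 j - y0 j with hd0def
  have hd0nn : ∀ j : ℤ, 1 ≤ j → j ≤ (N:ℤ) → 0 ≤ d0 j :=
    fun j a b => sub_nonneg.2 (h0 j a b)
  -- relation between the auxiliary difference process and X - Y
  have hrel : ∀ (t : ℕ) (ω : Ω) (k : ℤ),
      CoupledSilo.eAux N U d0 t ω k = trunc N (fun j => X t ω j - Y t ω j) k := by
    intro t
    induction t with
    | zero =>
      intro ω k
      simp only [CoupledSilo.eAux, trunc, hX0, hY0, hd0def]
    | succ t ih =>
      intro ω k
      have h1 : ∀ j : ℤ, (if 1 ≤ j ∧ j ≤ (N:ℤ) then X t ω j else 0)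
          - (if 1 ≤ j ∧ j ≤ (N:ℤ) then Y t ω j else 0) = CoupledSilo.eAux N U d0 t ω j := by
        intro j
        rw [ih ω j]
        simp only [trunc]
        split_ifs <;> ring
      rw [hXrec, hYrec]
      by_cases h : 1 ≤ k ∧ k ≤ (N:ℤ)
      · simp only [CoupledSilo.eAux, siloStep, trunc, if_pos h]
        rw [← h1 (k+1), ← h1 (k-1)]
        ring
      · simp only [CoupledSilo.eAux, siloStep, trunc, if_neg h]
  -- almost surely all uniforms lie in [0,1]
  have hae : ∀ᵐ ω ∂P, ∀ (s : ℕ) (k : ℤ), U s k ω ∈ Set.Icc (0:ℝ) 1 := by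
    rw [ae_all_iff]
    intro s
    rw [ae_all_iff]
    intro k
    rw [ae_iff]
    have hset : {ω | ¬ U s k ω ∈ Set.Icc (0:ℝ) 1} = U s k ⁻¹' (Set.Icc (0:ℝ) 1)ᶜ := rfl
    rw [hset, ← Measure.map_apply (hUm s k) measurableSet_Icc.compl, hUlaw s k]
    exact CoupledSilo.unif01_compl
  -- constants
  set c : ℝ := Real.cos (Real.pi / ((N:ℝ) + 1)) with hcdef
  have hπ : (0:ℝ) < Real.pi := Real.pi_pos
  have hNp : (0:ℝ) < (N:ℝ) + 1 := by positivity
  have hN1 : (1:ℝ) ≤ (N:ℝ) := by exact_mod_cast hN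
  have hhalf : Real.pi / ((N:ℝ) + 1) ≤ Real.pi / 2 := by
    rw [div_le_div_iff₀ hNp (by norm_num : (0:ℝ) < 2)]
    nlinarith
  have hc0 : 0 ≤ c := Real.cos_nonneg_of_mem_Icc ⟨by linarith [div_nonneg hπ.le hNp.le], hhalf⟩
  have hc1 : c < 1 := by
    have h2 : Real.pi / ((N:ℝ) + 1) ≤ Real.pi := by
      rw [div_le_iff₀ hNp]
      nlinarith
    have h3 : 0 < Real.pi / ((N:ℝ) + 1) := by positivity
    calc c < Real.cos 0 := Real.cos_lt_cos_of_nonneg_of_le_pi le_rfl h2 h3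
      _ = 1 := Real.cos_zero
  have hem := CoupledSilo.eAux_meas (N := N) (U := U) (d0 := d0) hUm
  -- the Lyapunov functional
  set m : ℕ → ENNReal := fun t => ∫⁻ ω, ENNReal.ofReal
      (∑ j ∈ Finset.Icc (1:ℤ) (N:ℤ), CoupledSilo.phiF N j * CoupledSilo.eAux N U d0 t ω j) ∂P
    with hm
  have msplit : ∀ t, m t = ∑ j ∈ Finset.Icc (1:ℤ) (N:ℤ),
      ENNReal.ofReal (CoupledSilo.phiF N j) *
        ∫⁻ ω, ENNReal.ofReal (CoupledSilo.eAux N U d0 t ω j) ∂P := by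
    intro t
    have hcong : (fun ω => ENNReal.ofReal
        (∑ j ∈ Finset.Icc (1:ℤ) (N:ℤ), CoupledSilo.phiF N j * CoupledSilo.eAux N U d0 t ω j))
        =ᵐ[P] fun ω => ∑ j ∈ Finset.Icc (1:ℤ) (N:ℤ),
          ENNReal.ofReal (CoupledSilo.phiF N j) * ENNReal.ofReal (CoupledSilo.eAux N U d0 t ω j) := by
      filter_upwards [hae] with ω hω
      have hnn := CoupledSilo.eAux_nonneg hd0nn hω
      rw [ENNReal.ofReal_sum_of_nonneg]
      · refine Finset.sum_congr rfl fun j hj => ?_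
        rw [Finset.mem_Icc] at hj
        exact ENNReal.ofReal_mul (CoupledSilo.phiF_nonneg N (by omega) (by omega))
      · intro j hj
        rw [Finset.mem_Icc] at hj
        exact mul_nonneg (CoupledSilo.phiF_nonneg N (by omega) (by omega)) (hnn t j)
    simp only [hm]
    rw [lintegral_congr_ae hcong,
      lintegral_finset_sum _ (fun j _ => ((hem t j).ennreal_ofReal).const_mul _)]
    exact Finset.sum_congr rfl fun j _ => lintegral_const_mul _ ((hem t j).ennreal_ofReal)
  -- one-step contraction
  have hstep : ∀ t, m (t+1) = ENNReal.ofReal c * m t := by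
    intro t
    have key : (fun ω => ENNReal.ofReal
        (∑ j ∈ Finset.Icc (1:ℤ) (N:ℤ), CoupledSilo.phiF N j * CoupledSilo.eAux N U d0 (t+1) ω j))
        =ᵐ[P] fun ω => ∑ j ∈ Finset.Icc (1:ℤ) (N:ℤ),
          ENNReal.ofReal (CoupledSilo.eAux N U d0 t ω j) *
            ENNReal.ofReal (CoupledSilo.phiF N (j-1) * U t j ω
              + CoupledSilo.phiF N (j+1) * (1 - U t j ω)) := by
      filter_upwards [hae] with ω hω
      have hnn := CoupledSilo.eAux_nonneg hd0nn hω
      have hreal : (∑ j ∈ Finset.Icc (1:ℤ) (N:ℤ),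
            CoupledSilo.phiF N j * CoupledSilo.eAux N U d0 (t+1) ω j)
          = ∑ j ∈ Finset.Icc (1:ℤ) (N:ℤ), CoupledSilo.eAux N U d0 t ω j *
              (CoupledSilo.phiF N (j-1) * U t j ω + CoupledSilo.phiF N (j+1) * (1 - U t j ω)) := by
        have expand : (∑ j ∈ Finset.Icc (1:ℤ) (N:ℤ),
              CoupledSilo.phiF N j * CoupledSilo.eAux N U d0 (t+1) ω j)
            = ∑ j ∈ Finset.Icc (1:ℤ) (N:ℤ),
              (CoupledSilo.phiF N j * (CoupledSilo.eAux N U d0 t ω (j+1) * U t (j+1) ω)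
                + CoupledSilo.phiF N j * (CoupledSilo.eAux N U d0 t ω (j-1) * (1 - U t (j-1) ω))) := by
          refine Finset.sum_congr rfl fun k hk => ?_
          rw [Finset.mem_Icc] at hk
          simp only [CoupledSilo.eAux, if_pos (show 1 ≤ k ∧ k ≤ (N:ℤ) from ⟨hk.1, hk.2⟩)]
          ring
        rw [expand, Finset.sum_add_distrib]
        have hA : (∑ j ∈ Finset.Icc (1:ℤ) (N:ℤ),
              CoupledSilo.phiF N j * (CoupledSilo.eAux N U d0 t ω (j+1) * U t (j+1) ω))
            = ∑ j ∈ Finset.Icc (1:ℤ) (N:ℤ),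
              CoupledSilo.phiF N (j-1) * (CoupledSilo.eAux N U d0 t ω j * U t j ω) := by
          have l1 : (∑ j ∈ Finset.Icc (1+1:ℤ) ((N:ℤ)+1),
                CoupledSilo.phiF N (j-1) * (CoupledSilo.eAux N U d0 t ω j * U t j ω))
              = ∑ j ∈ Finset.Icc (1:ℤ) (N:ℤ),
                CoupledSilo.phiF N j * (CoupledSilo.eAux N U d0 t ω (j+1) * U t (j+1) ω) := by
            rw [← Finset.map_add_right_Icc (1:ℤ) (N:ℤ) 1, Finset.sum_map]
            refine Finset.sum_congr rfl fun k _ => ?_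
            simp [addRightEmbedding_apply]
          rw [← l1]
          have l2 : (∑ j ∈ Finset.Icc (1+1:ℤ) ((N:ℤ)+1),
                CoupledSilo.phiF N (j-1) * (CoupledSilo.eAux N U d0 t ω j * U t j ω))
              = ∑ j ∈ Finset.Icc (1:ℤ) ((N:ℤ)+1),
                CoupledSilo.phiF N (j-1) * (CoupledSilo.eAux N U d0 t ω j * U t j ω) := by
            apply Finset.sum_subset
            · apply Finset.Icc_subset_Icc_left; omega
            · intro x hx hnx
              simp only [Finset.mem_Icc] at hx hnx
              have hx1 : x = 1 := by omega
              rw [hx1]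
              norm_num [CoupledSilo.phiF_zero]
          have l3 : (∑ j ∈ Finset.Icc (1:ℤ) (N:ℤ),
                CoupledSilo.phiF N (j-1) * (CoupledSilo.eAux N U d0 t ω j * U t j ω))
              = ∑ j ∈ Finset.Icc (1:ℤ) ((N:ℤ)+1),
                CoupledSilo.phiF N (j-1) * (CoupledSilo.eAux N U d0 t ω j * U t j ω) := by
            apply Finset.sum_subset
            · apply Finset.Icc_subset_Icc_right; omega
            · intro x hx hnx
              simp only [Finset.mem_Icc] at hx hnx
              rw [CoupledSilo.eAux_zero_out t ω x (by omega)]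
              ring
          rw [l2, ← l3]
        have hB : (∑ j ∈ Finset.Icc (1:ℤ) (N:ℤ),
              CoupledSilo.phiF N j * (CoupledSilo.eAux N U d0 t ω (j-1) * (1 - U t (j-1) ω)))
            = ∑ j ∈ Finset.Icc (1:ℤ) (N:ℤ),
              CoupledSilo.phiF N (j+1) * (CoupledSilo.eAux N U d0 t ω j * (1 - U t j ω)) := by
          have l1 : (∑ j ∈ Finset.Icc (1+(-1):ℤ) ((N:ℤ)+(-1)),
                CoupledSilo.phiF N (j+1) * (CoupledSilo.eAux N U d0 t ω j * (1 - U t j ω)))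
              = ∑ j ∈ Finset.Icc (1:ℤ) (N:ℤ),
                CoupledSilo.phiF N j * (CoupledSilo.eAux N U d0 t ω (j-1) * (1 - U t (j-1) ω)) := by
            rw [← Finset.map_add_right_Icc (1:ℤ) (N:ℤ) (-1), Finset.sum_map]
            refine Finset.sum_congr rfl fun k _ => ?_
            simp [addRightEmbedding_apply, sub_eq_add_neg]
          rw [← l1]
          have l2 : (∑ j ∈ Finset.Icc (1+(-1):ℤ) ((N:ℤ)+(-1)),
                CoupledSilo.phiF N (j+1) * (CoupledSilo.eAux N U d0 t ω j * (1 - U t j ω)))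
              = ∑ j ∈ Finset.Icc (0:ℤ) ((N:ℤ)),
                CoupledSilo.phiF N (j+1) * (CoupledSilo.eAux N U d0 t ω j * (1 - U t j ω)) := by
            apply Finset.sum_subset
            · intro x hx
              simp only [Finset.mem_Icc] at hx ⊢
              omega
            · intro x hx hnx
              simp only [Finset.mem_Icc] at hx hnx
              have hx1 : x = (N:ℤ) := by omega
              rw [hx1, CoupledSilo.phiF_top]
              ring
          have l3 : (∑ j ∈ Finset.Icc (1:ℤ) (N:ℤ),
                CoupledSilo.phiF N (j+1) * (CoupledSilo.eAux N U d0 t ω j * (1 - U t j ω)))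
              = ∑ j ∈ Finset.Icc (0:ℤ) ((N:ℤ)),
                CoupledSilo.phiF N (j+1) * (CoupledSilo.eAux N U d0 t ω j * (1 - U t j ω)) := by
            apply Finset.sum_subset
            · apply Finset.Icc_subset_Icc_left; omega
            · intro x hx hnx
              simp only [Finset.mem_Icc] at hx hnx
              rw [CoupledSilo.eAux_zero_out t ω x (by omega)]
              ring
          rw [l2, ← l3]
        rw [hA, hB, ← Finset.sum_add_distrib]
        exact Finset.sum_congr rfl fun j _ => by ring
      rw [hreal, ENNReal.ofReal_sum_of_nonneg]
      · exact Finset.sum_congr rfl fun j _ => ENNReal.ofReal_mul (hnn t j)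
      · intro j hj
        rw [Finset.mem_Icc] at hj
        have hUj := hω t j
        simp only [Set.mem_Icc] at hUj
        exact mul_nonneg (hnn t j)
          (add_nonneg (mul_nonneg (CoupledSilo.phiF_nonneg N (by omega) (by omega)) hUj.1)
            (mul_nonneg (CoupledSilo.phiF_nonneg N (by omega) (by omega)) (by linarith)))
    have hmeasψ : ∀ j : ℤ, Measurable fun ω => ENNReal.ofReal
        (CoupledSilo.phiF N (j-1) * U t j ω + CoupledSilo.phiF N (j+1) * (1 - U t j ω)) :=
      fun j => ((measurable_const.mul (hUm t j)).add
        (measurable_const.mul (measurable_const.sub (hUm t j)))).ennreal_ofReal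
    calc m (t+1)
        = ∫⁻ ω, ∑ j ∈ Finset.Icc (1:ℤ) (N:ℤ),
            ENNReal.ofReal (CoupledSilo.eAux N U d0 t ω j) *
              ENNReal.ofReal (CoupledSilo.phiF N (j-1) * U t j ω
                + CoupledSilo.phiF N (j+1) * (1 - U t j ω)) ∂P := by
          simp only [hm]; exact lintegral_congr_ae key
      _ = ∑ j ∈ Finset.Icc (1:ℤ) (N:ℤ), ∫⁻ ω,
            ENNReal.ofReal (CoupledSilo.eAux N U d0 t ω j) *
              ENNReal.ofReal (CoupledSilo.phiF N (j-1) * U t j ω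
                + CoupledSilo.phiF N (j+1) * (1 - U t j ω)) ∂P :=
          lintegral_finset_sum _ (fun j _ => ((hem t j).ennreal_ofReal).mul (hmeasψ j))
      _ = ∑ j ∈ Finset.Icc (1:ℤ) (N:ℤ),
            (∫⁻ ω, ENNReal.ofReal (CoupledSilo.eAux N U d0 t ω j) ∂P) *
              ∫⁻ ω, ENNReal.ofReal (CoupledSilo.phiF N (j-1) * U t j ω
                + CoupledSilo.phiF N (j+1) * (1 - U t j ω)) ∂P := by
          refine Finset.sum_congr rfl fun j _ => ?_
          have hψm : Measurable fun x : ℝ => ENNReal.ofReal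
              (CoupledSilo.phiF N (j-1) * x + CoupledSilo.phiF N (j+1) * (1 - x)) :=
            ((measurable_const.mul measurable_id).add
              (measurable_const.mul (measurable_const.sub measurable_id))).ennreal_ofReal
          have hind : IndepFun
              (fun ω => ENNReal.ofReal (CoupledSilo.eAux N U d0 t ω j))
              (fun ω => ENNReal.ofReal (CoupledSilo.phiF N (j-1) * U t j ω
                + CoupledSilo.phiF N (j+1) * (1 - U t j ω))) P :=
            (CoupledSilo.eAux_indepFun P hUm hUind t j).comp ENNReal.measurable_ofReal hψm
          exact lintegral_mul_eq_lintegral_mul_lintegral_of_indepFun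
            ((hem t j).ennreal_ofReal) (hmeasψ j) hind
      _ = ∑ j ∈ Finset.Icc (1:ℤ) (N:ℤ), ENNReal.ofReal (c * CoupledSilo.phiF N j) *
            ∫⁻ ω, ENNReal.ofReal (CoupledSilo.eAux N U d0 t ω j) ∂P := by
          refine Finset.sum_congr rfl fun j hj => ?_
          rw [Finset.mem_Icc] at hj
          have hψm : Measurable fun x : ℝ => ENNReal.ofReal
              (CoupledSilo.phiF N (j-1) * x + CoupledSilo.phiF N (j+1) * (1 - x)) :=
            ((measurable_const.mul measurable_id).add
              (measurable_const.mul (measurable_const.sub measurable_id))).ennreal_ofReal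
          have hlaw : (∫⁻ ω, ENNReal.ofReal (CoupledSilo.phiF N (j-1) * U t j ω
                + CoupledSilo.phiF N (j+1) * (1 - U t j ω)) ∂P)
              = ENNReal.ofReal ((CoupledSilo.phiF N (j-1) + CoupledSilo.phiF N (j+1)) / 2) := by
            rw [← lintegral_map hψm (hUm t j), hUlaw t j]
            exact CoupledSilo.unif01_lint _ _
              (CoupledSilo.phiF_nonneg N (by omega) (by omega))
              (CoupledSilo.phiF_nonneg N (by omega) (by omega))
          rw [hlaw, show (CoupledSilo.phiF N (j-1) + CoupledSilo.phiF N (j+1)) / 2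
              = c * CoupledSilo.phiF N j from by rw [hcdef, CoupledSilo.phiF_rec]; ring]
          ring
      _ = ENNReal.ofReal c * m t := by
          rw [msplit t, Finset.mul_sum]
          refine Finset.sum_congr rfl fun j hj => ?_
          rw [Finset.mem_Icc] at hj
          rw [ENNReal.ofReal_mul hc0, mul_assoc]
  -- geometric decay and summability
  have hm0 : m 0 ≠ ⊤ := by
    have hconst : m 0 = ENNReal.ofReal
        (∑ j ∈ Finset.Icc (1:ℤ) (N:ℤ), CoupledSilo.phiF N j * trunc N d0 j) := by
      simp only [hm]
      simp only [CoupledSilo.eAux]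
      rw [lintegral_const]
      simp
    rw [hconst]
    exact ENNReal.ofReal_ne_top
  have hpow : ∀ t, m t = (ENNReal.ofReal c) ^ t * m 0 := by
    intro t
    induction t with
    | zero => simp
    | succ t ih => rw [hstep t, ih, pow_succ]; ring
  have htsum : (∑' t, m t) ≠ ⊤ := by
    rw [tsum_congr hpow, ENNReal.tsum_mul_right, ENNReal.tsum_geometric]
    refine ENNReal.mul_ne_top (ENNReal.inv_ne_top.2 ?_) hm0
    exact (tsub_pos_of_lt (ENNReal.ofReal_lt_one.2 hc1)).ne'
  have hFm : ∀ t, Measurable fun ω => ENNReal.ofReal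
      (∑ j ∈ Finset.Icc (1:ℤ) (N:ℤ), CoupledSilo.phiF N j * CoupledSilo.eAux N U d0 t ω j) :=
    fun t => (Finset.measurable_sum _ fun j _ => (hem t j).const_mul _).ennreal_ofReal
  have haelt : ∀ᵐ ω ∂P, (∑' t, ENNReal.ofReal
      (∑ j ∈ Finset.Icc (1:ℤ) (N:ℤ), CoupledSilo.phiF N j * CoupledSilo.eAux N U d0 t ω j)) < ⊤ := by
    apply ae_lt_top' (Measurable.aemeasurable (by exact Measurable.ennreal_tsum fun t => hFm t))
    rw [lintegral_tsum fun t => (hFm t).aemeasurable]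
    exact htsum
  -- conclusion
  filter_upwards [haelt, hae] with ω hfin hω
  have hnn := CoupledSilo.eAux_nonneg hd0nn hω
  have hΦnn : ∀ t, 0 ≤ ∑ j ∈ Finset.Icc (1:ℤ) (N:ℤ),
      CoupledSilo.phiF N j * CoupledSilo.eAux N U d0 t ω j := fun t =>
    Finset.sum_nonneg fun j hj => by
      rw [Finset.mem_Icc] at hj
      exact mul_nonneg (CoupledSilo.phiF_nonneg N (by omega) (by omega)) (hnn t j)
  have hsummable : Summable fun t => ∑ j ∈ Finset.Icc (1:ℤ) (N:ℤ),
      CoupledSilo.phiF N j * CoupledSilo.eAux N U d0 t ω j := by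
    have h1 := ENNReal.summable_toReal hfin.ne
    refine (summable_congr fun t => ?_).1 h1
    rw [ENNReal.toReal_ofReal (hΦnn t)]
  have hΦ0 := hsummable.tendsto_atTop_zero
  have hφpos := CoupledSilo.phiF_pos N hi1 hi2
  have hle : ∀ t, CoupledSilo.eAux N U d0 t ω i
      ≤ (∑ j ∈ Finset.Icc (1:ℤ) (N:ℤ),
          CoupledSilo.phiF N j * CoupledSilo.eAux N U d0 t ω j) / CoupledSilo.phiF N i := by
    intro t
    rw [le_div_iff₀ hφpos]
    calc CoupledSilo.eAux N U d0 t ω i * CoupledSilo.phiF N i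
        = CoupledSilo.phiF N i * CoupledSilo.eAux N U d0 t ω i := mul_comm _ _
      _ ≤ ∑ j ∈ Finset.Icc (1:ℤ) (N:ℤ),
            CoupledSilo.phiF N j * CoupledSilo.eAux N U d0 t ω j :=
          Finset.single_le_sum (f := fun j => CoupledSilo.phiF N j * CoupledSilo.eAux N U d0 t ω j)
            (fun j hj => by
              rw [Finset.mem_Icc] at hj
              exact mul_nonneg (CoupledSilo.phiF_nonneg N (by omega) (by omega)) (hnn t j))
            (Finset.mem_Icc.2 ⟨hi1, hi2⟩)
  have htend : Tendsto (fun t => CoupledSilo.eAux N U d0 t ω i) atTop (nhds 0) := by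
    have hdiv : Tendsto (fun t => (∑ j ∈ Finset.Icc (1:ℤ) (N:ℤ),
        CoupledSilo.phiF N j * CoupledSilo.eAux N U d0 t ω j) / CoupledSilo.phiF N i)
        atTop (nhds 0) := by
      simpa using hΦ0.div_const (CoupledSilo.phiF N i)
    exact squeeze_zero (fun t => hnn t i) hle hdiv
  have heq : ∀ t, X t ω i - Y t ω i = CoupledSilo.eAux N U d0 t ω i := by
    intro t
    rw [hrel t ω i]
    simp [trunc, hi1, hi2]
  simp only [heq]
  exact htend
end
end
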